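/- arXiv:2211.06062 — 8 statements merged into one kernel-verified Lean document; each statement's English description precedes it below -/
import Mathlib

section
/- Let k ≥ 1 and define Φ_k : F_3^{2k} × F_3^{2k} → F_3 by Φ_k(u,v) = v_2 · (u_1 − v_1). Every maximal unlinked set S ⊆ F_3^{2k} (with respect to Φ_k) has cardinality exactly 3^k. -/
/-- every maximal unlinked set in `F_3^{2k}` with respect to
`Φ_k(u,v) = v₂ · (u₁ - v₁)` has cardinality `3^k`. -/
theorem card_max_unlinked_set (k : ℕ) (hk : 1 ≤ k)
    (S : Set ((Fin k → ZMod 3) × (Fin k → ZMod 3)))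
    (hS : ∀ u ∈ S, ∀ v ∈ S,
      dotProduct v.2 (u.1 - v.1) = 0 ∧ dotProduct u.2 (v.1 - u.1) = 0)
    (hmax : ∀ T : Set ((Fin k → ZMod 3) × (Fin k → ZMod 3)),
      (∀ u ∈ T, ∀ v ∈ T,
        dotProduct v.2 (u.1 - v.1) = 0 ∧ dotProduct u.2 (v.1 - u.1) = 0) →
      S ⊆ T → T = S) :
    S.ncard = 3 ^ k := by
  classical
  -- S is nonempty
  have hne : S.Nonempty := by
    rcases S.eq_empty_or_nonempty with h | h
    · exfalso
      have h1 := hmax {((0 : Fin k → ZMod 3), (0 : Fin k → ZMod 3))} ?_ (by simp [h])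
      · rw [h] at h1
        exact (Set.singleton_ne_empty _) h1
      · rintro u hu v hv
        simp only [Set.mem_singleton_iff] at hu hv
        subst hu; subst hv
        simp [dotProduct]
    · exact h
  obtain ⟨⟨a₀, b₀⟩, h₀⟩ := hne
  -- the dot product as a bilinear form
  let B : LinearMap.BilinForm (ZMod 3) (Fin k → ZMod 3) :=
    LinearMap.mk₂ (ZMod 3) dotProduct
      (fun a b c => add_dotProduct a b c)
      (fun r a b => smul_dotProduct r a b)
      (fun a b c => dotProduct_add a b c)
      (fun r a b => dotProduct_smul r a b)
  have hBapp : ∀ x y, B x y = dotProduct x y := fun _ _ => rfl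
  have hrefl : B.IsRefl := by
    intro x y hxy
    rw [hBapp] at hxy ⊢
    rwa [dotProduct_comm]
  have hnd : B.Nondegenerate := by
    refine ⟨?_, ?_⟩
    · intro m hm
      funext i
      have h1 := hm (Pi.single i 1)
      rw [hBapp, dotProduct_single, mul_one] at h1
      simpa using h1
    · intro m hm
      funext i
      have h1 := hm (Pi.single i 1)
      rw [hBapp, single_dotProduct, one_mul] at h1
      simpa using h1
  -- the subspace spanned by the differences of first coordinates
  set W : Submodule (ZMod 3) (Fin k → ZMod 3) :=
    Submodule.span (ZMod 3) ((fun p : (Fin k → ZMod 3) × (Fin k → ZMod 3) => p.1 - a₀) '' S)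
    with hW
  set Wp : Submodule (ZMod 3) (Fin k → ZMod 3) := B.orthogonal W with hWp
  -- second coordinates of elements of S are orthogonal to W
  have hperp : ∀ p ∈ S, p.2 ∈ Wp := by
    intro p hp
    rw [hWp, LinearMap.BilinForm.mem_orthogonal_iff]
    intro n hn
    have hle : W ≤ LinearMap.ker (B.flip p.2) := by
      rw [hW, Submodule.span_le]
      rintro _ ⟨q, hq, rfl⟩
      simp only [SetLike.mem_coe, LinearMap.mem_ker]
      show dotProduct (q.1 - a₀) p.2 = 0
      rw [dotProduct_comm]
      have h1 : dotProduct p.2 (q.1 - p.1) = 0 := (hS p hp q hq).2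
      have h2 : dotProduct p.2 (a₀ - p.1) = 0 := (hS p hp (a₀, b₀) h₀).2
      have h3 : q.1 - a₀ = (q.1 - p.1) - (a₀ - p.1) := by
        rw [sub_sub_sub_cancel_right]
      rw [h3, dotProduct_sub, h1, h2, sub_zero]
    have h4 := hle hn
    rw [LinearMap.mem_ker] at h4
    exact h4
  -- the candidate maximal unlinked set
  set T : Set ((Fin k → ZMod 3) × (Fin k → ZMod 3)) :=
    {p | p.1 - a₀ ∈ W ∧ p.2 ∈ Wp} with hT
  have hST : S ⊆ T := by
    intro p hp
    refine ⟨Submodule.subset_span ⟨p, hp, rfl⟩, hperp p hp⟩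
  have hTunl : ∀ u ∈ T, ∀ v ∈ T,
      dotProduct v.2 (u.1 - v.1) = 0 ∧ dotProduct u.2 (v.1 - u.1) = 0 := by
    intro u hu v hv
    have hdiff : ∀ x y : (Fin k → ZMod 3) × (Fin k → ZMod 3),
        x ∈ T → y ∈ T → x.1 - y.1 ∈ W := by
      intro x y hx hy
      have : x.1 - y.1 = (x.1 - a₀) - (y.1 - a₀) := by rw [sub_sub_sub_cancel_right]
      rw [this]
      exact sub_mem hx.1 hy.1
    constructor
    · have h1 : dotProduct (u.1 - v.1) v.2 = 0 :=
        (LinearMap.BilinForm.mem_orthogonal_iff.mp hv.2) _ (hdiff u v hu hv)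
      rwa [dotProduct_comm]
    · have h1 : dotProduct (v.1 - u.1) u.2 = 0 :=
        (LinearMap.BilinForm.mem_orthogonal_iff.mp hu.2) _ (hdiff v u hv hu)
      rwa [dotProduct_comm]
  have hTS : T = S := hmax T hTunl hST
  -- now count
  have hcardT : Nat.card T = Nat.card W * Nat.card Wp := by
    have e : (W × Wp) ≃ T :=
      { toFun := fun x => ⟨(a₀ + x.1.1, x.2.1), by
          constructor
          · simpa using x.1.2
          · exact x.2.2⟩
        invFun := fun p => (⟨p.1.1 - a₀, p.2.1⟩, ⟨p.1.2, p.2.2⟩)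
        left_inv := fun x => by
          ext <;> simp
        right_inv := fun p => by
          apply Subtype.ext
          apply Prod.ext <;> simp }
    rw [← Nat.card_congr e, Nat.card_prod]
  have hfinW : Module.finrank (ZMod 3) W + Module.finrank (ZMod 3) Wp = k := by
    have h1 : Module.finrank (ZMod 3) Wp
        = Module.finrank (ZMod 3) (Fin k → ZMod 3) - Module.finrank (ZMod 3) W :=
      LinearMap.BilinForm.finrank_orthogonal hnd W
    have h2 : Module.finrank (ZMod 3) (Fin k → ZMod 3) = k := Module.finrank_fin_fun _
    have h3 := W.finrank_le
    rw [h2] at h3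
    omega
  have hcW : Nat.card W = 3 ^ Module.finrank (ZMod 3) W := by
    rw [Nat.card_eq_fintype_card, Module.card_eq_pow_finrank (K := ZMod 3), ZMod.card]
  have hcWp : Nat.card Wp = 3 ^ Module.finrank (ZMod 3) Wp := by
    rw [Nat.card_eq_fintype_card, Module.card_eq_pow_finrank (K := ZMod 3), ZMod.card]
  calc S.ncard = T.ncard := by rw [hTS]
    _ = Nat.card T := (Nat.card_coe_set_eq T).symm
    _ = 3 ^ k := by
        rw [hcardT, hcW, hcWp, ← pow_add, hfinW]
end

section
/- Let k ≥ 1 and Φ_k as above. Every maximal unlinked set in F_3^{2k} has the form a + V for some a ∈ F_3^{2k} and a k-dimensional F_3-subspace V of F_3^{2k} satisfying V = π_1(V) ⊕ π_1(V)^⊥, where π_1(V)^⊥ is the orthogonal complement of π_1(V) in F_3^k with respect to the dot product, and moreover π_2(a) ∈ π_1(V)^⊥. -/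
open Matrix

/-- The dot product as a bilinear form. -/
noncomputable def dotB (k : ℕ) : LinearMap.BilinForm (ZMod 3) (Fin k → ZMod 3) :=
  LinearMap.mk₂ (ZMod 3) dotProduct
    (fun m₁ m₂ n => add_dotProduct m₁ m₂ n)
    (fun c m n => smul_dotProduct c m n)
    (fun m n₁ n₂ => dotProduct_add m n₁ n₂)
    (fun c m n => dotProduct_smul c m n)

lemma dotB_apply (k : ℕ) (x y : Fin k → ZMod 3) : dotB k x y = dotProduct x y := rfl

lemma dotB_refl (k : ℕ) : (dotB k).IsRefl := by
  intro x y h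
  rw [dotB_apply, dotProduct_comm] at h
  exact h

lemma dotB_nondegenerate (k : ℕ) : (dotB k).Nondegenerate := by
  refine ⟨fun x hx => ?_, fun x hx => ?_⟩
  · funext i
    have := hx (Pi.single i 1)
    rw [dotB_apply, dotProduct_single] at this
    simpa using this
  · funext i
    have := hx (Pi.single i 1)
    rw [dotB_apply, single_dotProduct] at this
    simpa using this

/-- A product of submodules is linearly equivalent to the product of the submodules. -/
def Submodule.prodEquivProd {R M M₂ : Type*} [Semiring R] [AddCommMonoid M] [AddCommMonoid M₂]
    [Module R M] [Module R M₂] (p : Submodule R M) (q : Submodule R M₂) :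
    (p.prod q) ≃ₗ[R] p × q where
  toFun x := (⟨x.1.1, x.2.1⟩, ⟨x.1.2, x.2.2⟩)
  invFun y := ⟨(y.1.1, y.2.1), ⟨y.1.2, y.2.2⟩⟩
  map_add' _ _ := rfl
  map_smul' _ _ := rfl
  left_inv _ := rfl
  right_inv _ := rfl

/-- every maximal unlinked set in `F_3^{2k}` has the form `a + V`
with `V` a `k`-dimensional subspace satisfying `V = π₁(V) ⊕ π₁(V)^⊥` (inside
`F_3^k ⊕ F_3^k`), and `π₂(a) ∈ π₁(V)^⊥`. -/
theorem max_unlinked_set_shape (k : ℕ) (hk : 1 ≤ k)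
    (S : Set ((Fin k → ZMod 3) × (Fin k → ZMod 3)))
    (hS : ∀ u ∈ S, ∀ v ∈ S,
      dotProduct v.2 (u.1 - v.1) = 0 ∧ dotProduct u.2 (v.1 - u.1) = 0)
    (hmax : ∀ T : Set ((Fin k → ZMod 3) × (Fin k → ZMod 3)),
      (∀ u ∈ T, ∀ v ∈ T,
        dotProduct v.2 (u.1 - v.1) = 0 ∧ dotProduct u.2 (v.1 - u.1) = 0) →
      S ⊆ T → T = S) :
    ∃ (a : (Fin k → ZMod 3) × (Fin k → ZMod 3))
      (V : Submodule (ZMod 3) ((Fin k → ZMod 3) × (Fin k → ZMod 3))),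
      S = (fun v => a + v) '' (V : Set ((Fin k → ZMod 3) × (Fin k → ZMod 3))) ∧
      Module.finrank (ZMod 3) V = k ∧
      (V : Set ((Fin k → ZMod 3) × (Fin k → ZMod 3))) =
        {x | x.1 ∈ Submodule.map (LinearMap.fst (ZMod 3) (Fin k → ZMod 3) (Fin k → ZMod 3)) V ∧
          ∀ w ∈ Submodule.map (LinearMap.fst (ZMod 3) (Fin k → ZMod 3) (Fin k → ZMod 3)) V,
            dotProduct w x.2 = 0} ∧
      (∀ w ∈ Submodule.map (LinearMap.fst (ZMod 3) (Fin k → ZMod 3) (Fin k → ZMod 3)) V,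
        dotProduct w a.2 = 0) := by
  classical
  -- S is nonempty
  have hne : S.Nonempty := by
    rcases Set.eq_empty_or_nonempty S with h | h
    · exfalso
      have h0 := hmax {(0, 0)} (by
        rintro u hu v hv
        simp only [Set.mem_singleton_iff] at hu hv
        subst hu; subst hv
        simp) (by rw [h]; exact Set.empty_subset _)
      rw [h] at h0
      exact absurd h0 (by simp [Set.eq_empty_iff_forall_notMem])
    · exact h
  obtain ⟨a, ha⟩ := hne
  -- the subspace W = span of π₁(S - a)
  set W : Submodule (ZMod 3) (Fin k → ZMod 3) :=
    Submodule.span (ZMod 3) ((fun u => u.1 - a.1) '' S) with hW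
  set Wo : Submodule (ZMod 3) (Fin k → ZMod 3) := (dotB k).orthogonal W with hWo
  have memWo : ∀ x, x ∈ Wo ↔ ∀ w ∈ W, dotProduct w x = 0 := by
    intro x
    exact Iff.rfl
  -- basic facts
  have key : ∀ u ∈ S, ∀ v ∈ S, dotProduct u.2 (v.1 - a.1) = 0 := by
    intro u hu v hv
    have h1 := (hS u hu v hv).2
    have h2 := (hS u hu a ha).2
    have : dotProduct u.2 ((v.1 - u.1) - (a.1 - u.1)) = 0 := by
      rw [dotProduct_sub, h1, h2, sub_zero]
    simpa using this
  -- a.2 is orthogonal to W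
  have haWo : a.2 ∈ Wo := by
    rw [memWo]
    intro w hw
    induction hw using Submodule.span_induction with
    | mem x hx =>
      obtain ⟨v, hv, rfl⟩ := hx
      rw [dotProduct_comm]
      exact key a ha v hv
    | zero => simp
    | add x y _ _ hx hy => rw [add_dotProduct, hx, hy, add_zero]
    | smul c x _ hx => rw [smul_dotProduct, hx, smul_zero]
  -- for u ∈ S, u.2 - a.2 ∈ Wo
  have hu2 : ∀ u ∈ S, u.2 - a.2 ∈ Wo := by
    intro u hu
    rw [memWo]
    intro w hw
    induction hw using Submodule.span_induction with
    | mem x hx =>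
      obtain ⟨v, hv, rfl⟩ := hx
      rw [dotProduct_comm, sub_dotProduct, key u hu v hv, key a ha v hv, sub_zero]
    | zero => simp
    | add x y _ _ hx hy => rw [add_dotProduct, hx, hy, add_zero]
    | smul c x _ hx => rw [smul_dotProduct, hx, smul_zero]
  set V : Submodule (ZMod 3) ((Fin k → ZMod 3) × (Fin k → ZMod 3)) := W.prod Wo with hV
  -- T := a + V is unlinked and contains S, hence equals S
  set T : Set ((Fin k → ZMod 3) × (Fin k → ZMod 3)) :=
    (fun v => a + v) '' (V : Set _) with hT
  have hTunlinked : ∀ u ∈ T, ∀ v ∈ T,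
      dotProduct v.2 (u.1 - v.1) = 0 ∧ dotProduct u.2 (v.1 - u.1) = 0 := by
    rintro u ⟨s, hs, rfl⟩ v ⟨t, ht, rfl⟩
    obtain ⟨hs1, hs2⟩ := (Submodule.mem_prod).1 hs
    obtain ⟨ht1, ht2⟩ := (Submodule.mem_prod).1 ht
    have haw : ∀ w ∈ W, ∀ z ∈ Wo, dotProduct (a.2 + z) w = 0 := by
      intro w hw z hz
      rw [add_dotProduct, dotProduct_comm a.2 w, (memWo a.2).1 haWo w hw,
        dotProduct_comm z w, (memWo z).1 hz w hw, add_zero]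
    constructor
    · have : (a + s).1 - (a + t).1 = s.1 - t.1 := by simp
      rw [this]
      show dotProduct (a.2 + t.2) (s.1 - t.1) = 0
      rw [dotProduct_sub, haw s.1 hs1 t.2 ht2, haw t.1 ht1 t.2 ht2, sub_zero]
    · have : (a + t).1 - (a + s).1 = t.1 - s.1 := by simp
      rw [this]
      show dotProduct (a.2 + s.2) (t.1 - s.1) = 0
      rw [dotProduct_sub, haw t.1 ht1 s.2 hs2, haw s.1 hs1 s.2 hs2, sub_zero]
  have hSsubT : S ⊆ T := by
    intro u hu
    refine ⟨u - a, ?_, by simp⟩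
    refine (Submodule.mem_prod).2 ⟨?_, hu2 u hu⟩
    exact Submodule.subset_span ⟨u, hu, rfl⟩
  have hTS : T = S := hmax T hTunlinked hSsubT
  -- π₁(V) = W
  have hfst : Submodule.map (LinearMap.fst (ZMod 3) (Fin k → ZMod 3) (Fin k → ZMod 3)) V = W :=
    Submodule.prod_map_fst W Wo
  refine ⟨a, V, hTS.symm, ?_, ?_, ?_⟩
  · -- finrank
    have h1 : Module.finrank (ZMod 3) V =
        Module.finrank (ZMod 3) W + Module.finrank (ZMod 3) Wo := by
      rw [(Submodule.prodEquivProd W Wo).finrank_eq, Module.finrank_prod]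
    have h2 : Module.finrank (ZMod 3) Wo =
        Module.finrank (ZMod 3) (Fin k → ZMod 3) - Module.finrank (ZMod 3) W :=
      LinearMap.BilinForm.finrank_orthogonal (dotB_nondegenerate k) W
    have h3 : Module.finrank (ZMod 3) (Fin k → ZMod 3) = k := Module.finrank_fin_fun (ZMod 3)
    have h4 : Module.finrank (ZMod 3) W ≤ Module.finrank (ZMod 3) (Fin k → ZMod 3) :=
      W.finrank_le
    rw [h3] at h4
    rw [h1, h2, h3]
    omega
  · -- shape of V
    rw [hfst]
    ext x
    simp only [Set.mem_setOf_eq, SetLike.mem_coe]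
    rw [hV, Submodule.mem_prod]
    exact and_congr Iff.rfl (memWo x.2)
  · -- a.2 orthogonal
    rw [hfst]
    exact (memWo a.2).1 haWo
end

section
/- Let K = Q(√−3) and ρ = (−1+√−3)/2. For a positive integer u coprime to 3, the cubic residue symbol (ρ/u)_3 equals 1 if and only if u ≡ ±1 mod 9. -/
open Polynomial

noncomputable section

/-- The ring of integers `ℤ[ρ]` of `ℚ(√-3)`, realized as `ℤ[X]/(X²+X+1)`. -/
abbrev Eis : Type := AdjoinRoot (X ^ 2 + X + 1 : Polynomial ℤ)

/-- `ρ = (−1+√−3)/2`, a primitive cube root of unity. -/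
def ρ : Eis := AdjoinRoot.root _

lemma ρ_rel : ρ ^ 2 + ρ + 1 = 0 := by
  have h := AdjoinRoot.eval₂_root (X ^ 2 + X + 1 : Polynomial ℤ)
  simpa [ρ, eval₂_add, eval₂_pow, eval₂_X, eval₂_one] using h

/-- The absolute norm `N : ℤ[ρ] → ℕ`. -/
def eisNorm (α : Eis) : ℕ := (Algebra.norm ℤ α).natAbs

lemma eis_poly_monic : (X ^ 2 + X + 1 : Polynomial ℤ).Monic := by monicity!
lemma eis_poly_natDegree : (X ^ 2 + X + 1 : Polynomial ℤ).natDegree = 2 := by compute_degree!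

lemma eis_poly_irred : Irreducible (X ^ 2 + X + 1 : Polynomial ℤ) := by
  have h3 : (Polynomial.cyclotomic 3 ℤ) = X ^ 2 + X + 1 := by
    have := Polynomial.cyclotomic_prime ℤ 3
    rw [this]
    simp [Finset.sum_range_succ]
    ring
  have := Polynomial.cyclotomic.irreducible (n := 3) (by norm_num)
  rwa [h3] at this

instance : IsDomain Eis := by
  have hp : Prime (X ^ 2 + X + 1 : Polynomial ℤ) := eis_poly_irred.prime
  unfold Eis AdjoinRoot
  exact AdjoinRoot.isDomain_of_prime hp

def eisB : Module.Basis (Fin 2) ℤ Eis :=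
  (AdjoinRoot.powerBasis' eis_poly_monic).basis.reindex
    (finCongr (by rw [AdjoinRoot.powerBasis'_dim, eis_poly_natDegree]))

lemma eisB_apply (j : Fin 2) : eisB j = ρ ^ (j : ℕ) := by
  rw [eisB, Module.Basis.reindex_apply, PowerBasis.basis_eq_pow]
  simp [ρ]

lemma eisB_zero : eisB 0 = 1 := by simpa using eisB_apply 0
lemma eisB_one : eisB 1 = ρ := by simpa using eisB_apply 1

lemma eis_rep (z : Eis) : ∃ a b : ℤ, z = (a : Eis) + (b : Eis) * ρ := by
  refine ⟨eisB.repr z 0, eisB.repr z 1, ?_⟩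
  have h := eisB.sum_repr z
  rw [Fin.sum_univ_two, eisB_zero, eisB_one] at h
  conv_lhs => rw [← h]
  simp [zsmul_eq_mul]

lemma eisB_repr (a b : ℤ) :
    eisB.repr ((a : Eis) + (b : Eis) * ρ) = Finsupp.single 0 a + Finsupp.single 1 b := by
  have : (a : Eis) + (b : Eis) * ρ = a • eisB 0 + b • eisB 1 := by
    rw [eisB_zero, eisB_one]; push_cast; simp [zsmul_eq_mul]
  rw [this, map_add, map_smul, map_smul, eisB.repr_self, eisB.repr_self]
  simp [Finsupp.smul_single]

lemma eis_norm_formula (a b : ℤ) :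
    Algebra.norm ℤ ((a : Eis) + (b : Eis) * ρ) = a ^ 2 - a * b + b ^ 2 := by
  have hρ2 : ρ ^ 2 = -1 - ρ := by linear_combination ρ_rel
  rw [Algebra.norm_eq_matrix_det eisB]
  rw [Matrix.det_fin_two]
  have e0 : ((a : Eis) + (b : Eis) * ρ) * eisB 0 = (a : Eis) + (b : Eis) * ρ := by
    rw [eisB_zero, mul_one]
  have e1 : ((a : Eis) + (b : Eis) * ρ) * eisB 1 = ((-b : ℤ) : Eis) + ((a - b : ℤ) : Eis) * ρ := by
    rw [eisB_one]; push_cast; linear_combination (b : Eis) * ρ_rel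
  rw [Algebra.leftMulMatrix_eq_repr_mul, Algebra.leftMulMatrix_eq_repr_mul,
    Algebra.leftMulMatrix_eq_repr_mul, Algebra.leftMulMatrix_eq_repr_mul, e0, e1, eisB_repr, eisB_repr]
  simp [Finsupp.single_apply]
  ring

lemma ρ_cube : ρ ^ 3 = 1 := by linear_combination (ρ - 1) * ρ_rel
lemma ρ_unit : IsUnit ρ := IsUnit.of_mul_eq_one (a := ρ) (ρ ^ 2) (by linear_combination (ρ - 1) * ρ_rel)

def eisConj : Eis →+* Eis :=
  AdjoinRoot.lift (Int.castRingHom Eis) (-1 - ρ) (by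
    simp only [eval₂_add, eval₂_pow, eval₂_X, eval₂_one]
    linear_combination ρ_rel)

lemma eisConj_ρ : eisConj ρ = -1 - ρ := AdjoinRoot.lift_root _

lemma eisConj_rep (a b : ℤ) :
    eisConj ((a : Eis) + (b : Eis) * ρ) = (a : Eis) + (b : Eis) * (-1 - ρ) := by
  rw [map_add, map_mul, map_intCast, map_intCast, eisConj_ρ]

lemma mul_conj (z : Eis) : z * eisConj z = ((Algebra.norm ℤ z : ℤ) : Eis) := by
  obtain ⟨a, b, rfl⟩ := eis_rep z
  rw [eisConj_rep, eis_norm_formula]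
  push_cast
  linear_combination (-(b:Eis)^2) * ρ_rel

lemma eis_norm_nonneg (z : Eis) : 0 ≤ Algebra.norm ℤ z := by
  obtain ⟨a, b, rfl⟩ := eis_rep z
  rw [eis_norm_formula]
  nlinarith [sq_nonneg (a - b), sq_nonneg a, sq_nonneg b]

lemma eisNorm_coe (z : Eis) : (eisNorm z : ℤ) = Algebra.norm ℤ z :=
  Int.natAbs_of_nonneg (eis_norm_nonneg z)

lemma eisNorm_mul (z w : Eis) : eisNorm (z * w) = eisNorm z * eisNorm w := by
  unfold eisNorm
  rw [map_mul, Int.natAbs_mul]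

lemma eisNorm_intCast (n : ℤ) : eisNorm (n : Eis) = n.natAbs ^ 2 := by
  have : (n : Eis) = (n : Eis) + ((0 : ℤ) : Eis) * ρ := by push_cast; ring
  unfold eisNorm
  rw [this, eis_norm_formula]
  simp [← Int.natAbs_pow]

lemma eisNorm_eq_zero_iff (z : Eis) : eisNorm z = 0 ↔ z = 0 := by
  constructor
  · intro h
    obtain ⟨a, b, rfl⟩ := eis_rep z
    have h' : Algebra.norm ℤ ((a : Eis) + (b : Eis) * ρ) = 0 := by
      rw [← eisNorm_coe, h]; rfl
    rw [eis_norm_formula] at h'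
    have ha : a = 0 ∧ b = 0 := by constructor <;> nlinarith [sq_nonneg (a-b), sq_nonneg (a+b)]
    rw [ha.1, ha.2]; push_cast; ring
  · rintro rfl
    simpa using eisNorm_intCast 0

lemma eisNorm_one : eisNorm 1 = 1 := by simpa using eisNorm_intCast 1

lemma eisNorm_eq_one_iff (z : Eis) : eisNorm z = 1 ↔ IsUnit z := by
  constructor
  · intro h
    have h2 := mul_conj z
    have : Algebra.norm ℤ z = 1 ∨ Algebra.norm ℤ z = -1 := by
      have := eisNorm_coe z; omega
    rcases this with h1 | h1
    · exact IsUnit.of_mul_eq_one (a := z) (eisConj z) (by rw [h2, h1]; norm_num)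
    · exact IsUnit.of_mul_eq_one (a := z) (-eisConj z) (by rw [mul_neg, h2, h1]; norm_num)
  · rintro ⟨w, rfl⟩
    have := eisNorm_mul (w : Eis) ((w⁻¹ : Eisˣ) : Eis)
    rw [Units.mul_inv, eisNorm_one] at this
    exact Nat.eq_one_of_mul_eq_one_right this.symm

lemma cube_root_cases (x : Eis) (hx : x ^ 3 = 1) : x = 1 ∨ x = ρ ∨ x = ρ ^ 2 := by
  have key : (x - 1) * ((x - ρ) * (x - ρ ^ 2)) = 0 := by
    linear_combination hx + (x - 1) * (ρ - 1 - x) * ρ_rel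
  rcases mul_eq_zero.mp key with h | h
  · left; exact sub_eq_zero.mp h
  · rcases mul_eq_zero.mp h with h' | h'
    · right; left; exact sub_eq_zero.mp h'
    · right; right; exact sub_eq_zero.mp h'

lemma one_sub_ρ_dvd_three : (1 - ρ) ∣ (3 : Eis) :=
  ⟨-(1 - ρ) * ρ ^ 2, by linear_combination (ρ^2 - 3*ρ + 3) * ρ_rel⟩

lemma one_sub_ρsq_dvd_three : (1 - ρ ^ 2) ∣ (3 : Eis) :=
  ⟨1 - ρ, by linear_combination (2 - ρ) * ρ_rel⟩

lemma ρ_sub_ρsq_dvd_three : (ρ - ρ ^ 2) ∣ (3 : Eis) :=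
  ⟨ρ ^ 2 - ρ, by linear_combination (ρ^2 - 3*ρ + 3) * ρ_rel⟩

lemma ρ_sub_one_dvd_three : (ρ - 1) ∣ (3 : Eis) := by
  rw [show (ρ - 1 : Eis) = -(1 - ρ) by ring]; exact (neg_dvd).mpr one_sub_ρ_dvd_three
lemma ρsq_sub_one_dvd_three : (ρ ^ 2 - 1) ∣ (3 : Eis) := by
  rw [show (ρ ^ 2 - 1 : Eis) = -(1 - ρ ^ 2) by ring]; exact (neg_dvd).mpr one_sub_ρsq_dvd_three
lemma ρsq_sub_ρ_dvd_three : (ρ ^ 2 - ρ) ∣ (3 : Eis) := by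
  rw [show (ρ ^ 2 - ρ : Eis) = -(ρ - ρ ^ 2) by ring]; exact (neg_dvd).mpr ρ_sub_ρsq_dvd_three

lemma cube_root_eq_of_dvd (π x y : Eis) (h3 : ¬ π ∣ (3 : Eis)) (hx : x ^ 3 = 1)
    (hy : y ^ 3 = 1) (hd : π ∣ x - y) : x = y := by
  rcases cube_root_cases x hx with rfl | rfl | rfl <;>
    rcases cube_root_cases y hy with rfl | rfl | rfl <;>
    first
      | rfl
      | exact absurd (hd.trans one_sub_ρ_dvd_three) h3
      | exact absurd (hd.trans one_sub_ρsq_dvd_three) h3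
      | exact absurd (hd.trans ρ_sub_ρsq_dvd_three) h3
      | exact absurd (hd.trans ρ_sub_one_dvd_three) h3
      | exact absurd (hd.trans ρsq_sub_one_dvd_three) h3
      | exact absurd (hd.trans ρsq_sub_ρ_dvd_three) h3

lemma eis_norm_conj (z : Eis) : Algebra.norm ℤ (eisConj z) = Algebra.norm ℤ z := by
  obtain ⟨a, b, rfl⟩ := eis_rep z
  rw [eisConj_rep]
  have : (a : Eis) + (b : Eis) * (-1 - ρ) = ((a - b : ℤ) : Eis) + ((-b : ℤ) : Eis) * ρ := by
    push_cast; ring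
  rw [this, eis_norm_formula, eis_norm_formula]
  ring

lemma eis_division (a b : Eis) (hb : b ≠ 0) :
    ∃ q : Eis, eisNorm (a - q * b) < eisNorm b := by
  obtain ⟨x, y, hxy⟩ := eis_rep (a * eisConj b)
  set n : ℤ := Algebra.norm ℤ b with hn
  have hn0 : 0 < n := by
    rcases lt_or_eq_of_le (eis_norm_nonneg b) with h | h
    · exact h
    · exfalso; apply hb
      rw [← eisNorm_eq_zero_iff]
      have := eisNorm_coe b
      omega
  set q1 : ℤ := (2 * x + n) / (2 * n) with hq1
  set q2 : ℤ := (2 * y + n) / (2 * n) with hq2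
  set r1 : ℤ := x - q1 * n with hr1
  set r2 : ℤ := y - q2 * n with hr2
  have hb1 : -n ≤ 2 * r1 ∧ 2 * r1 < n := by
    have h1 := Int.mul_ediv_add_emod (2 * x + n) (2 * n)
    have h2 := Int.emod_nonneg (2 * x + n) (by positivity : (2 * n) ≠ 0)
    have h3 := Int.emod_lt_of_pos (2 * x + n) (by positivity : 0 < 2 * n)
    constructor <;> nlinarith [h1, h2, h3]
  have hb2 : -n ≤ 2 * r2 ∧ 2 * r2 < n := by
    have h1 := Int.mul_ediv_add_emod (2 * y + n) (2 * n)
    have h2 := Int.emod_nonneg (2 * y + n) (by positivity : (2 * n) ≠ 0)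
    have h3 := Int.emod_lt_of_pos (2 * y + n) (by positivity : 0 < 2 * n)
    constructor <;> nlinarith [h1, h2, h3]
  refine ⟨(q1 : Eis) + (q2 : Eis) * ρ, ?_⟩
  have hcb := mul_conj b
  have e : (a - ((q1 : Eis) + (q2 : Eis) * ρ) * b) * eisConj b
      = ((r1 : Eis) + (r2 : Eis) * ρ) := by
    rw [hr1, hr2]
    push_cast
    linear_combination hxy - ((q1 : Eis) + (q2 : Eis) * ρ) * hcb
  have hnorm : Algebra.norm ℤ (a - ((q1 : Eis) + (q2 : Eis) * ρ) * b) * n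
      = r1 ^ 2 - r1 * r2 + r2 ^ 2 := by
    calc Algebra.norm ℤ (a - ((q1 : Eis) + (q2 : Eis) * ρ) * b) * n
        = Algebra.norm ℤ (a - ((q1 : Eis) + (q2 : Eis) * ρ) * b)
            * Algebra.norm ℤ (eisConj b) := by rw [eis_norm_conj]
      _ = Algebra.norm ℤ ((a - ((q1 : Eis) + (q2 : Eis) * ρ) * b) * eisConj b) :=
            (map_mul (Algebra.norm ℤ) _ _).symm
      _ = r1 ^ 2 - r1 * r2 + r2 ^ 2 := by rw [e, eis_norm_formula]
  have hlt : Algebra.norm ℤ (a - ((q1 : Eis) + (q2 : Eis) * ρ) * b) < n := by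
    have hnn := eis_norm_nonneg (a - ((q1 : Eis) + (q2 : Eis) * ρ) * b)
    nlinarith [hb1.1, hb1.2, hb2.1, hb2.2, hnorm, hn0]
  have c1 := eisNorm_coe (a - ((q1 : Eis) + (q2 : Eis) * ρ) * b)
  have c2 := eisNorm_coe b
  omega

instance : EuclideanDomain Eis where
  quotient a b := if h : b = 0 then 0 else (eis_division a b h).choose
  quotient_zero a := dif_pos rfl
  remainder a b := a - (if h : b = 0 then 0 else (eis_division a b h).choose) * b
  quotient_mul_add_remainder_eq a b := by ring
  r a b := eisNorm a < eisNorm b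
  r_wellFounded := (measure eisNorm).wf
  remainder_lt a b hb := by
    simp only [dif_neg hb]
    exact (eis_division a b hb).choose_spec
  mul_left_not_lt a b hb := by
    simp only [not_lt, eisNorm_mul]
    have h1 : eisNorm b ≠ 0 := fun h => hb ((eisNorm_eq_zero_iff b).mp h)
    nlinarith [Nat.one_le_iff_ne_zero.mpr h1, Nat.zero_le (eisNorm a)]

lemma eisNorm_one_sub_ρ : eisNorm (1 - ρ) = 3 := by
  have : (1 - ρ : Eis) = ((1 : ℤ) : Eis) + ((-1 : ℤ) : Eis) * ρ := by push_cast; ring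
  unfold eisNorm
  rw [this, eis_norm_formula]
  norm_num

lemma eisNorm_two : eisNorm (2 : Eis) = 4 := by
  have : (2 : Eis) = ((2 : ℤ) : Eis) := by norm_cast
  rw [this, eisNorm_intCast]
  norm_num

lemma zmod3_sq : ∀ t : ZMod 3, t ^ 2 = 0 ∨ t ^ 2 = 1 := by decide

lemma eis_norm_form_ne_two (a b : ℤ) : a ^ 2 - a * b + b ^ 2 ≠ 2 := by
  intro h
  have h' := congrArg (Int.cast : ℤ → ZMod 3) h
  push_cast at h'
  have h30 : (3 : ZMod 3) = 0 := by decide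
  have h3 : ((a : ZMod 3) + b) ^ 2 = 2 := by
    linear_combination h' + (a : ZMod 3) * b * h30
  rcases zmod3_sq ((a : ZMod 3) + b) with h0 | h0 <;> rw [h0] at h3 <;> exact absurd h3 (by decide)

lemma eis_prime_two : Prime (2 : Eis) := by
  rw [← UniqueFactorizationMonoid.irreducible_iff_prime]
  constructor
  · intro h
    have := (eisNorm_eq_one_iff 2).mpr h
    rw [eisNorm_two] at this; omega
  · intro α β hαβ
    by_contra hc
    push_neg at hc
    obtain ⟨h1, h2⟩ := hc
    have hn : eisNorm α * eisNorm β = 4 := by rw [← eisNorm_mul, ← hαβ, eisNorm_two]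
    have hα1 : eisNorm α ≠ 1 := fun h => h1 ((eisNorm_eq_one_iff α).mp h)
    have hβ1 : eisNorm β ≠ 1 := fun h => h2 ((eisNorm_eq_one_iff β).mp h)
    have hd : eisNorm α ∣ 4 := ⟨eisNorm β, hn.symm⟩
    have hle : eisNorm α ≤ 4 := Nat.le_of_dvd (by norm_num) hd
    have hα : eisNorm α = 2 := by interval_cases h : eisNorm α <;> omega
    obtain ⟨a, b, rfl⟩ := eis_rep α
    have := eisNorm_coe ((a : Eis) + (b : Eis) * ρ)
    rw [eis_norm_formula, hα] at this
    exact eis_norm_form_ne_two a b (by omega)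

lemma one_sub_ρ_not_unit : ¬ IsUnit (1 - ρ : Eis) := by
  intro h
  have := (eisNorm_eq_one_iff _).mpr h
  rw [eisNorm_one_sub_ρ] at this; omega

lemma prime_dvd_one_sub_ρ_of_dvd_three {p : Eis} (hp : Prime p) (h : p ∣ (3 : Eis)) :
    p ∣ (1 - ρ) := by
  have h3e : (3 : Eis) = (1 - ρ) * (-(1 - ρ) * ρ ^ 2) := by
    linear_combination (ρ^2 - 3*ρ + 3) * ρ_rel
  rw [h3e] at h
  rcases hp.2.2 _ _ h with h' | h'
  · exact h'
  · rw [show (-(1 - ρ) * ρ ^ 2 : Eis) = (1 - ρ) * (-ρ ^ 2) by ring] at h'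
    rcases hp.2.2 _ _ h' with h'' | h''
    · exact h''
    · exfalso
      have hu : IsUnit (-ρ ^ 2 : Eis) := by
        refine IsUnit.of_mul_eq_one (-ρ) ?_
        linear_combination (ρ - 1) * ρ_rel
      exact hp.2.1 (isUnit_of_dvd_unit h'' hu)

lemma assoc_one_sub_ρ_of_prime_dvd {p : Eis} (hp : Prime p) (h : p ∣ (1 - ρ)) :
    (1 - ρ : Eis) ∣ p := by
  obtain ⟨d, hd⟩ := h
  have hnd : eisNorm p * eisNorm d = 3 := by rw [← eisNorm_mul, ← hd, eisNorm_one_sub_ρ]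
  have hp1 : eisNorm p ≠ 1 := fun h1 => hp.2.1 ((eisNorm_eq_one_iff p).mp h1)
  have hd1 : eisNorm d = 1 := by
    have hdd : eisNorm d ∣ 3 := ⟨eisNorm p, by rw [← hnd, Nat.mul_comm]⟩
    rcases (Nat.prime_three).eq_one_or_self_of_dvd _ hdd with h1 | h1
    · exact h1
    · rw [h1] at hnd; omega
  obtain ⟨u, hu⟩ := (eisNorm_eq_one_iff d).mp hd1
  refine ⟨(u⁻¹ : Eisˣ), ?_⟩
  rw [hd, ← hu, mul_assoc, ← Units.val_mul, mul_inv_cancel, Units.val_one, mul_one]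

lemma prime_norm_mod3 {p : Eis} (hp : Prime p) (h3 : ¬ p ∣ (3 : Eis)) :
    eisNorm p % 3 = 1 := by
  obtain ⟨a, b, rfl⟩ := eis_rep p
  have hcoe : (eisNorm ((a : Eis) + (b : Eis) * ρ) : ℤ) = a ^ 2 - a * b + b ^ 2 := by
    rw [eisNorm_coe, eis_norm_formula]
  have hnd3 : ¬ (3 : ℤ) ∣ (a ^ 2 - a * b + b ^ 2) := by
    intro hdvd3
    have h3ab : (3 : ℤ) ∣ (a + b) ^ 2 := by
      have he : (a + b) ^ 2 = (a ^ 2 - a * b + b ^ 2) + 3 * (a * b) := by ring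
      rw [he]; exact dvd_add hdvd3 ⟨a * b, rfl⟩
    have h3ab' : (3 : ℤ) ∣ (a + b) :=
      (Int.prime_three).dvd_of_dvd_pow h3ab
    obtain ⟨k, hk⟩ := h3ab'
    have d1 : (1 - ρ : Eis) ∣ ((a + b : ℤ) : Eis) := by
      refine one_sub_ρ_dvd_three.trans ⟨(k : Eis), ?_⟩
      rw [hk]; push_cast; ring
    have hdvd : (1 - ρ : Eis) ∣ ((a : Eis) + (b : Eis) * ρ) := by
      have he : (a : Eis) + (b : Eis) * ρ = ((a + b : ℤ) : Eis) - (b : Eis) * (1 - ρ) := by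
        push_cast; ring
      rw [he]
      exact dvd_sub d1 (Dvd.intro_left _ rfl)
    obtain ⟨γ, hγ⟩ := hdvd
    have hpd : ((a : Eis) + (b : Eis) * ρ) ∣ (1 - ρ) * γ := by rw [← hγ]
    rcases hp.2.2 _ _ hpd with h' | h'
    · exact h3 (h'.trans one_sub_ρ_dvd_three)
    · obtain ⟨δ, hδ⟩ := h'
      rw [hδ] at hγ
      have hcancel : (1 : Eis) = (1 - ρ) * δ := by
        have := hγ
        rw [show (1 - ρ) * (((a : Eis) + (b : Eis) * ρ) * δ)
            = ((a : Eis) + (b : Eis) * ρ) * ((1 - ρ) * δ) by ring] at this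
        exact mul_left_cancel₀ hp.ne_zero (by rw [← this, mul_one])
      exact one_sub_ρ_not_unit (IsUnit.of_mul_eq_one _ hcancel.symm)
  have hz : ((a ^ 2 - a * b + b ^ 2 : ℤ) : ZMod 3) = ((a : ZMod 3) + b) ^ 2 := by
    have h30 : (3 : ZMod 3) = 0 := by decide
    push_cast
    linear_combination (-(a : ZMod 3)) * b * h30
  have hne0 : ((a ^ 2 - a * b + b ^ 2 : ℤ) : ZMod 3) ≠ 0 := by
    intro h
    exact hnd3 ((ZMod.intCast_zmod_eq_zero_iff_dvd _ 3).mp h)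
  have h1 : ((a ^ 2 - a * b + b ^ 2 : ℤ) : ZMod 3) = 1 := by
    rcases zmod3_sq ((a : ZMod 3) + b) with h0 | h0
    · exact absurd (hz.trans h0) hne0
    · rw [hz, h0]
  have hmod : (a ^ 2 - a * b + b ^ 2) % 3 = 1 := by
    have := (ZMod.intCast_eq_intCast_iff (a ^ 2 - a * b + b ^ 2) 1 3).mp (by exact_mod_cast h1)
    have h' := this
    unfold Int.ModEq at h'
    omega
  omega

lemma J_prime (J : Eis → Eis → Eis)
    (hJchar : ∀ π a : Eis, Prime π → ¬ π ∣ (3 : Eis) → ¬ π ∣ a →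
      (J a π) ^ 3 = 1 ∧ π ∣ a ^ ((eisNorm π - 1) / 3) - J a π)
    {p : Eis} (hp : Prime p) (h3 : ¬ p ∣ (3 : Eis)) :
    ∃ a : ℕ, eisNorm p = 3 * a + 1 ∧ J ρ p = ρ ^ a := by
  have hmod := prime_norm_mod3 hp h3
  have hne0 : eisNorm p ≠ 0 := fun h => hp.ne_zero ((eisNorm_eq_zero_iff p).mp h)
  refine ⟨(eisNorm p - 1) / 3, by omega, ?_⟩
  have hpρ : ¬ p ∣ ρ := fun hd => hp.2.1 (isUnit_of_dvd_unit hd ρ_unit)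
  obtain ⟨hcube, hdvd⟩ := hJchar p ρ hp h3 hpρ
  have hx : (ρ ^ ((eisNorm p - 1) / 3)) ^ 3 = 1 := by
    rw [← pow_mul, mul_comm, pow_mul, ρ_cube, one_pow]
  exact (cube_root_eq_of_dvd p _ _ h3 hx hcube hdvd).symm

lemma claimB (J : Eis → Eis → Eis)
    (hJbot : ∀ a b c : Eis, J a (b * c) = J a b * J a c)
    (hJchar : ∀ π a : Eis, Prime π → ¬ π ∣ (3 : Eis) → ¬ π ∣ a →
      (J a π) ^ 3 = 1 ∧ π ∣ a ^ ((eisNorm π - 1) / 3) - J a π) :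
    ∀ n : ℕ, ∀ z : Eis, eisNorm z = n → z ≠ 0 → ¬ IsUnit z → ¬ (1 - ρ) ∣ z →
    ∃ a : ℕ, eisNorm z = 3 * a + 1 ∧ J ρ z = ρ ^ a := by
  intro n
  induction n using Nat.strong_induction_on with
  | _ n ih =>
  intro z hz h0 h1 h2
  obtain ⟨p, hpirr, hpdvd⟩ := WfDvdMonoid.exists_irreducible_factor h1 h0
  have hp : Prime p := (UniqueFactorizationMonoid.irreducible_iff_prime).mp hpirr
  obtain ⟨w, rfl⟩ := hpdvd
  have hp3 : ¬ p ∣ (3 : Eis) := by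
    intro hdvd
    exact h2 ((assoc_one_sub_ρ_of_prime_dvd hp
      (prime_dvd_one_sub_ρ_of_dvd_three hp hdvd)).trans (Dvd.intro w rfl))
  by_cases hw : IsUnit w
  · obtain ⟨u, rfl⟩ := hw
    have hassoc : Associated p (p * ↑u) := ⟨u, rfl⟩
    have hz' : Prime (p * (u : Eis)) := hassoc.prime hp
    have h3' : ¬ (p * (u : Eis)) ∣ (3 : Eis) := fun hd =>
      hp3 ((Dvd.intro _ rfl).trans hd)
    exact J_prime J hJchar hz' h3'
  · have hw0 : w ≠ 0 := by rintro rfl; rw [mul_zero] at h0; exact h0 rfl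
    have hw2 : ¬ (1 - ρ) ∣ w := fun hd => h2 (hd.mul_left p)
    have hnp1 : eisNorm p ≠ 1 := fun h => hp.2.1 ((eisNorm_eq_one_iff p).mp h)
    have hnp0 : eisNorm p ≠ 0 := fun h => hp.ne_zero ((eisNorm_eq_zero_iff p).mp h)
    have hnw0 : eisNorm w ≠ 0 := fun h => hw0 ((eisNorm_eq_zero_iff w).mp h)
    have hlt : eisNorm w < n := by
      rw [← hz, eisNorm_mul]
      have hp2 : 2 ≤ eisNorm p := by omega
      calc eisNorm w < 2 * eisNorm w := by omega
        _ ≤ eisNorm p * eisNorm w := Nat.mul_le_mul_right _ hp2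
    obtain ⟨b, hwb, hJw⟩ := ih (eisNorm w) hlt w rfl hw0 hw hw2
    obtain ⟨c, hpc, hJp⟩ := J_prime J hJchar hp hp3
    refine ⟨3 * c * b + c + b, ?_, ?_⟩
    · rw [eisNorm_mul, hpc, hwb]; ring
    · rw [hJbot, hJp, hJw]
      have he : ρ ^ (3 * c * b + c + b) = (ρ ^ 3) ^ (c * b) * (ρ ^ c * ρ ^ b) := by
        rw [← pow_mul, ← pow_add, ← pow_add]
        congr 1
        ring
      rw [he, ρ_cube, one_pow, one_mul]

lemma eisNorm_three : eisNorm (3 : Eis) = 9 := by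
  have : (3 : Eis) = ((3 : ℤ) : Eis) := by norm_cast
  rw [this, eisNorm_intCast]; norm_num

lemma ρ_ne_one : ρ ≠ 1 := by
  intro h
  have h3 : (3 : Eis) = 0 := by
    have := ρ_rel
    rw [h] at this
    linear_combination this
  have h9 := congrArg eisNorm h3
  have h0 : eisNorm (0 : Eis) = 0 := (eisNorm_eq_zero_iff 0).mpr rfl
  rw [eisNorm_three, h0] at h9
  omega

lemma ρ_sq_ne_one : ρ ^ 2 ≠ 1 := by
  intro h
  have h3 := ρ_cube
  rw [pow_succ, h, one_mul] at h3
  exact ρ_ne_one h3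


/-- first supplementary law of cubic reciprocity: for a positive
integer `u` coprime to `3`, the cubic residue symbol `(ρ/u)₃` equals `1` if and
only if `u ≡ ±1 mod 9`. Here `J a b` denotes the cubic residue symbol `(a/b)₃`,
axiomatized by multiplicativity in both arguments and the prime characterization. -/
theorem cubic_symbol_rho_eq_one_iff (J : Eis → Eis → Eis)
    (hJbot : ∀ a b c : Eis, J a (b * c) = J a b * J a c)
    (hJtop : ∀ a b c : Eis, J (a * b) c = J a c * J b c)
    (hJchar : ∀ π a : Eis, Prime π → ¬ π ∣ (3 : Eis) → ¬ π ∣ a →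
      (J a π) ^ 3 = 1 ∧ π ∣ a ^ ((eisNorm π - 1) / 3) - J a π)
    (u : ℕ) (hu : 0 < u) (hu3 : Nat.Coprime u 3) :
    J ρ ((u : ℕ) : Eis) = 1 ↔ (u % 9 = 1 ∨ u % 9 = 8) := by
  have hu30 : u % 3 ≠ 0 := by
    intro h
    have h3u : (3 : ℕ) ∣ u := Nat.dvd_of_mod_eq_zero h
    have hg := Nat.dvd_gcd h3u (dvd_refl 3)
    rw [Nat.Coprime] at hu3
    rw [hu3] at hg
    exact absurd hg (by norm_num)
  by_cases hu1 : u = 1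
  · subst hu1
    have h23 : ¬ (2 : Eis) ∣ (3 : Eis) := by
      intro ⟨c, hc⟩
      have h9 : eisNorm (3 : Eis) = eisNorm 2 * eisNorm c := by rw [hc, eisNorm_mul]
      rw [eisNorm_three, eisNorm_two] at h9
      omega
    have h2ρ : ¬ (2 : Eis) ∣ ρ := fun hd =>
      eis_prime_two.2.1 (isUnit_of_dvd_unit hd ρ_unit)
    obtain ⟨hcube, -⟩ := hJchar 2 ρ eis_prime_two h23 h2ρ
    have hne : J ρ 2 ≠ 0 := by
      intro h
      rw [h, zero_pow (by norm_num)] at hcube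
      exact zero_ne_one hcube
    have hmul := hJbot ρ 2 1
    rw [mul_one] at hmul
    have hJ1 : J ρ 1 = 1 :=
      (mul_left_cancel₀ hne (by rw [← hmul, mul_one])).symm
    rw [show ((1 : ℕ) : Eis) = 1 by norm_cast, hJ1]
    norm_num
  · -- u ≥ 2
    have hu2 : 2 ≤ u := by omega
    have hnu : eisNorm ((u : ℕ) : Eis) = u ^ 2 := by
      rw [show ((u : ℕ) : Eis) = ((u : ℤ) : Eis) by push_cast; rfl, eisNorm_intCast]
      simp
    have hz0 : ((u : ℕ) : Eis) ≠ 0 := by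
      intro h
      have := (eisNorm_eq_zero_iff _).mpr h
      rw [hnu] at this
      nlinarith
    have hzu : ¬ IsUnit ((u : ℕ) : Eis) := by
      intro h
      have := (eisNorm_eq_one_iff _).mpr h
      rw [hnu] at this
      nlinarith
    have hzlam : ¬ (1 - ρ) ∣ ((u : ℕ) : Eis) := by
      intro ⟨c, hc⟩
      have h9 : eisNorm ((u : ℕ) : Eis) = eisNorm (1 - ρ) * eisNorm c := by
        rw [hc, eisNorm_mul]
      rw [hnu, eisNorm_one_sub_ρ] at h9
      have h3u2 : (3 : ℕ) ∣ u ^ 2 := ⟨eisNorm c, h9⟩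
      have h3u : (3 : ℕ) ∣ u := Nat.Prime.dvd_of_dvd_pow (by norm_num) h3u2
      omega
    obtain ⟨a, ha, hJa⟩ := claimB J hJbot hJchar (eisNorm ((u : ℕ) : Eis))
      ((u : ℕ) : Eis) rfl hz0 hzu hzlam
    rw [hnu] at ha
    rw [hJa]
    have key : ρ ^ a = 1 ↔ a % 3 = 0 := by
      constructor
      · intro h
        have hmod : ρ ^ a = ρ ^ (a % 3) := by
          conv_lhs => rw [← Nat.div_add_mod a 3]
          rw [pow_add, pow_mul, ρ_cube, one_pow, one_mul]
        rw [hmod] at h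
        have h3 : a % 3 < 3 := Nat.mod_lt _ (by norm_num)
        interval_cases h' : a % 3
        · rfl
        · rw [pow_one] at h; exact absurd h ρ_ne_one
        · exact absurd h ρ_sq_ne_one
      · intro h
        have : a = 3 * (a / 3) := by omega
        rw [this, pow_mul, ρ_cube, one_pow]
    rw [key]
    have hsq : u ^ 2 % 9 = (u % 9) ^ 2 % 9 := Nat.pow_mod u 2 9
    have hva : (3 * a + 1) % 9 = (u % 9) ^ 2 % 9 := by rw [← ha, hsq]
    have hv9 : u % 9 < 9 := Nat.mod_lt _ (by norm_num)
    have hv3 : u % 9 % 3 = u % 3 := by omega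
    set v := u % 9 with hv
    clear_value v
    interval_cases v <;> norm_num at hva ⊢ <;> omega

end
end

section
/- Let (u_1, u_2, u_3) be pairwise coprime cubefree positive integers, let p be a prime with p ≠ 3 and p ∤ u_1 u_2 u_3. Then the equation u_1 X³ + u_2 Y³ + u_3 Z³ = 0 has a nontrivial solution over the p-adic numbers Q_p. -/
open Finset Polynomial

namespace LocalCubic

variable {p : ℕ} [Fact p.Prime]

def Qc (c x : ZMod p) : Prop := ∃ t : ZMod p, t ≠ 0 ∧ x = c * t ^ 3

instance (c : ZMod p) : DecidablePred (Qc c) := fun _ => Fintype.decidableExistsFintype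

lemma Qc.ne_zero {c x : ZMod p} (hc : c ≠ 0) (h : Qc c x) : x ≠ 0 := by
  obtain ⟨t, ht, rfl⟩ := h
  exact mul_ne_zero hc (pow_ne_zero _ ht)

lemma Qc.neg {c x : ZMod p} (h : Qc c x) : Qc c (-x) := by
  obtain ⟨t, ht, rfl⟩ := h
  exact ⟨-t, neg_ne_zero.2 ht, by ring⟩

lemma Qc.symm {c d : ZMod p} (h : Qc c d) : Qc d c := by
  obtain ⟨t, ht, rfl⟩ := h
  refine ⟨t⁻¹, inv_ne_zero ht, ?_⟩
  field_simp

lemma Qc.trans {a b c : ZMod p} (h1 : Qc a b) (h2 : Qc b c) : Qc a c := by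
  obtain ⟨t, ht, rfl⟩ := h1
  obtain ⟨s, hs, rfl⟩ := h2
  exact ⟨t * s, mul_ne_zero ht hs, by ring⟩

lemma Qc.of_both {c d u : ZMod p} (h1 : Qc c u) (h2 : Qc d u) : Qc d c :=
  h2.trans h1.symm

lemma Qc_iff_of {d d' : ZMod p} (h : Qc d d') (x : ZMod p) : Qc d' x ↔ Qc d x :=
  ⟨fun hx => h.trans hx, fun hx => h.symm.trans hx⟩

lemma cube_fiber_card_le (c : ZMod p) :
    (univ.filter fun x : ZMod p => x ^ 3 = c).card ≤ 3 := by
  classical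
  have hne : (X ^ 3 - C c : (ZMod p)[X]) ≠ 0 := by
    intro h
    have h2 := congrArg natDegree h
    rw [natDegree_X_pow_sub_C, natDegree_zero] at h2
    exact three_ne_zero h2
  calc (univ.filter fun x : ZMod p => x ^ 3 = c).card
      ≤ (X ^ 3 - C c : (ZMod p)[X]).roots.toFinset.card := by
        apply card_le_card
        intro x hx
        simp only [mem_filter] at hx
        rw [Multiset.mem_toFinset, mem_roots hne]
        simp [hx.2]
    _ ≤ Multiset.card (X ^ 3 - C c : (ZMod p)[X]).roots := Multiset.toFinset_card_le _
    _ ≤ _ := by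
        have h3 := card_roots' (X ^ 3 - C c : (ZMod p)[X])
        rwa [natDegree_X_pow_sub_C] at h3

lemma card_Qc_filter (c : ZMod p) (hc : c ≠ 0) :
    (univ.filter fun x : ZMod p => Qc c x).card
      = (univ.filter fun x : ZMod p => Qc 1 x).card := by
  refine card_nbij' (fun y => c⁻¹ * y) (fun x => c * x) ?_ ?_ ?_ ?_
  · intro y hy
    simp only [mem_coe, mem_filter, mem_univ, true_and] at hy ⊢
    obtain ⟨t, ht, rfl⟩ := hy
    exact ⟨t, ht, by rw [one_mul]; exact inv_mul_cancel_left₀ hc _⟩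
  · intro x hx
    simp only [mem_coe, mem_filter, mem_univ, true_and] at hx ⊢
    obtain ⟨t, ht, rfl⟩ := hx
    exact ⟨t, ht, by ring⟩
  · intro y _; exact mul_inv_cancel_left₀ hc y
  · intro x _; exact inv_mul_cancel_left₀ hc x

lemma tricho {a b : ZMod p} (ha : a ≠ 0) (hb : b ≠ 0)
    (hA : ¬ Qc 1 a) (hB : ¬ Qc 1 b) (hAB : ¬ Qc b a) :
    ∀ u : ZMod p, u ≠ 0 → Qc 1 u ∨ Qc a u ∨ Qc b u := by
  classical
  set C1 : Finset (ZMod p) := univ.filter fun x => Qc 1 x with hC1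
  set CA : Finset (ZMod p) := univ.filter fun x => Qc a x with hCA
  set CB : Finset (ZMod p) := univ.filter fun x => Qc b x with hCB
  set NZ : Finset (ZMod p) := univ.erase 0 with hNZ
  have hcard_nz : NZ.card = p - 1 := by
    rw [hNZ, card_erase_of_mem (mem_univ _), card_univ, ZMod.card]
  -- p - 1 ≤ 3 * C1.card
  have himage : NZ.image (fun x => x ^ 3) ⊆ C1 := by
    intro y hy
    simp only [mem_image, hNZ, mem_erase, mem_univ, and_true] at hy
    obtain ⟨x, hx, rfl⟩ := hy
    simp only [hC1, mem_filter, mem_univ, true_and]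
    exact ⟨x, hx, by ring⟩
  have hle : NZ.card ≤ 3 * C1.card := by
    calc NZ.card ≤ 3 * (NZ.image (fun x => x ^ 3)).card := by
          apply card_le_mul_card_image
          intro y _
          calc (NZ.filter fun x => x ^ 3 = y).card
              ≤ (univ.filter fun x : ZMod p => x ^ 3 = y).card :=
                card_le_card (filter_subset_filter _ (subset_univ _))
            _ ≤ 3 := cube_fiber_card_le y
      _ ≤ 3 * C1.card := by
          exact Nat.mul_le_mul_left 3 (card_le_card himage)
  -- disjointness
  have d1A : Disjoint C1 CA := by
    rw [disjoint_left]
    intro u hu1 huA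
    simp only [hC1, hCA, mem_filter, mem_univ, true_and] at hu1 huA
    exact hA (huA.of_both hu1)
  have d1B : Disjoint C1 CB := by
    rw [disjoint_left]
    intro u hu1 huB
    simp only [hC1, hCB, mem_filter, mem_univ, true_and] at hu1 huB
    exact hB (huB.of_both hu1)
  have dAB : Disjoint CA CB := by
    rw [disjoint_left]
    intro u huA huB
    simp only [hCA, hCB, mem_filter, mem_univ, true_and] at huA huB
    exact hAB (huA.of_both huB)
  have hsub : C1 ∪ CA ∪ CB ⊆ NZ := by
    intro u hu
    simp only [mem_union, hC1, hCA, hCB, mem_filter, mem_univ, true_and] at hu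
    simp only [hNZ, mem_erase, mem_univ, and_true]
    rcases hu with (h | h) | h
    · exact h.ne_zero one_ne_zero
    · exact h.ne_zero ha
    · exact h.ne_zero hb
  have hcards : (C1 ∪ CA ∪ CB).card = 3 * C1.card := by
    rw [card_union_of_disjoint, card_union_of_disjoint d1A,
      card_Qc_filter a ha, card_Qc_filter b hb]
    · ring
    · exact disjoint_union_left.2 ⟨d1B, dAB⟩
  have heq : C1 ∪ CA ∪ CB = NZ := by
    apply eq_of_subset_of_card_le hsub
    rw [hcards]
    exact hle
  intro u hu
  have hmem : u ∈ C1 ∪ CA ∪ CB := by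
    rw [heq]; simp [hNZ, hu]
  simp only [mem_union, hC1, hCA, hCB, mem_filter, mem_univ, true_and] at hmem
  tauto

/-- cyclotomic-style count: `#{x : x ∈ cC, 1+x ∈ dC}`. -/
def nn (c d : ZMod p) : ℕ :=
  (univ.filter fun x : ZMod p => Qc c x ∧ Qc d (1 + x)).card

lemma nn_symm (c d : ZMod p) : nn c d = nn d c := by
  refine card_nbij' (fun x => -(1 + x)) (fun x => -(1 + x)) ?_ ?_ ?_ ?_
  · intro x hx
    simp only [mem_coe, mem_filter, mem_univ, true_and] at hx ⊢
    refine ⟨hx.2.neg, ?_⟩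
    have h : 1 + -(1 + x) = -x := by ring
    rw [h]
    exact hx.1.neg
  · intro x hx
    simp only [mem_coe, mem_filter, mem_univ, true_and] at hx ⊢
    refine ⟨hx.2.neg, ?_⟩
    have h : 1 + -(1 + x) = -x := by ring
    rw [h]
    exact hx.1.neg
  · intro x _; ring
  · intro x _; ring

lemma nn_inv (c d : ZMod p) (hc : c ≠ 0) (hd : d ≠ 0) :
    nn c d = nn c⁻¹ (d * c⁻¹) := by
  have key : ∀ (c d : ZMod p), c ≠ 0 →
      ∀ x ∈ (univ.filter fun x : ZMod p => Qc c x ∧ Qc d (1 + x)),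
      x⁻¹ ∈ (univ.filter fun x : ZMod p => Qc c⁻¹ x ∧ Qc (d * c⁻¹) (1 + x)) := by
    intro c d hc x hx
    simp only [mem_filter, mem_univ, true_and] at hx ⊢
    obtain ⟨⟨t, ht, rfl⟩, hx2⟩ := hx
    obtain ⟨s, hs, hseq⟩ := hx2
    have hct : c * t ^ 3 ≠ 0 := mul_ne_zero hc (pow_ne_zero _ ht)
    constructor
    · exact ⟨t⁻¹, inv_ne_zero ht, by rw [mul_inv, inv_pow]⟩
    · refine ⟨s * t⁻¹, mul_ne_zero hs (inv_ne_zero ht), ?_⟩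
      have h1 : 1 + (c * t ^ 3)⁻¹ = (1 + c * t ^ 3) * (c * t ^ 3)⁻¹ := by
        rw [add_mul, one_mul, mul_inv_cancel₀ hct, add_comm]
      rw [h1, hseq]
      field_simp
  refine card_nbij' (fun x => x⁻¹) (fun x => x⁻¹) (key c d hc) ?_ ?_ ?_
  · have h2 := key c⁻¹ (d * c⁻¹) (inv_ne_zero hc)
    intro x hx
    have h3 := h2 x hx
    rwa [inv_inv, mul_assoc, inv_mul_cancel₀ hc, mul_one] at h3
  · intro x _
    exact inv_inv x
  · intro x _
    exact inv_inv x

lemma nn_congr {d d' : ZMod p} (c : ZMod p) (h : Qc d d') : nn c d' = nn c d := by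
  unfold nn
  congr 1
  apply filter_congr
  exact fun x _ => and_congr_right fun _ => Qc_iff_of h (1 + x)

lemma row {a b : ZMod p} (r : ZMod p) (ha : a ≠ 0) (hb : b ≠ 0)
    (hA : ¬ Qc 1 a) (hB : ¬ Qc 1 b) (hAB : ¬ Qc b a) :
    (univ.filter fun x : ZMod p => Qc r x).card
      = nn r 1 + nn r a + nn r b
        + (univ.filter fun x : ZMod p => Qc r x ∧ 1 + x = 0).card := by
  classical
  have hsplit : (univ.filter fun x : ZMod p => Qc r x)
      = (((univ.filter fun x : ZMod p => Qc r x ∧ Qc 1 (1 + x))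
          ∪ (univ.filter fun x : ZMod p => Qc r x ∧ Qc a (1 + x)))
          ∪ (univ.filter fun x : ZMod p => Qc r x ∧ Qc b (1 + x)))
          ∪ (univ.filter fun x : ZMod p => Qc r x ∧ 1 + x = 0) := by
    ext x
    simp only [mem_union, mem_filter, mem_univ, true_and]
    constructor
    · intro h
      by_cases h0 : 1 + x = 0
      · exact Or.inr ⟨h, h0⟩
      · rcases tricho ha hb hA hB hAB (1 + x) h0 with h' | h' | h'
        · exact Or.inl (Or.inl (Or.inl ⟨h, h'⟩))
        · exact Or.inl (Or.inl (Or.inr ⟨h, h'⟩))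
        · exact Or.inl (Or.inr ⟨h, h'⟩)
    · tauto
  have d1a : Disjoint (univ.filter fun x : ZMod p => Qc r x ∧ Qc 1 (1 + x))
      (univ.filter fun x : ZMod p => Qc r x ∧ Qc a (1 + x)) := by
    rw [disjoint_left]
    intro u h1 h2
    simp only [mem_filter, mem_univ, true_and] at h1 h2
    exact hA (h2.2.of_both h1.2)
  have d1b : Disjoint ((univ.filter fun x : ZMod p => Qc r x ∧ Qc 1 (1 + x))
      ∪ (univ.filter fun x : ZMod p => Qc r x ∧ Qc a (1 + x)))
      (univ.filter fun x : ZMod p => Qc r x ∧ Qc b (1 + x)) := by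
    rw [disjoint_left]
    intro u h1 h2
    simp only [mem_union, mem_filter, mem_univ, true_and] at h1 h2
    rcases h1 with h1 | h1
    · exact hB (h2.2.of_both h1.2)
    · exact hAB (h1.2.of_both h2.2)
  have d4 : Disjoint (((univ.filter fun x : ZMod p => Qc r x ∧ Qc 1 (1 + x))
      ∪ (univ.filter fun x : ZMod p => Qc r x ∧ Qc a (1 + x)))
      ∪ (univ.filter fun x : ZMod p => Qc r x ∧ Qc b (1 + x)))
      (univ.filter fun x : ZMod p => Qc r x ∧ 1 + x = 0) := by
    rw [disjoint_left]
    intro u h1 h2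
    simp only [mem_union, mem_filter, mem_univ, true_and] at h1 h2
    rcases h1 with (h1 | h1) | h1
    · exact h1.2.ne_zero one_ne_zero h2.2
    · exact h1.2.ne_zero ha h2.2
    · exact h1.2.ne_zero hb h2.2
  rw [hsplit, card_union_of_disjoint d4, card_union_of_disjoint d1b,
    card_union_of_disjoint d1a]
  rfl

lemma key_count {a b : ZMod p} (ha : a ≠ 0) (hb : b ≠ 0)
    (hA : ¬ Qc 1 a) (hB : ¬ Qc 1 b) (hAB : ¬ Qc b a) :
    ∃ y z : ZMod p, 1 + a * y ^ 3 + b * z ^ 3 = 0 := by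
  classical
  have hab : Qc 1 (a * b) := by
    rcases tricho ha hb hA hB hAB (a * b) (mul_ne_zero ha hb) with h | h | h
    · exact h
    · exfalso
      obtain ⟨t, ht, heq⟩ := h
      exact hB ⟨t, ht, by rw [one_mul]; exact mul_left_cancel₀ ha heq⟩
    · exfalso
      obtain ⟨t, ht, heq⟩ := h
      exact hA ⟨t, ht, by
        rw [one_mul]
        exact mul_right_cancel₀ hb (heq.trans (mul_comm b (t ^ 3)))⟩
  have hIa : Qc b a⁻¹ := by
    obtain ⟨t, ht, habt⟩ := hab
    rw [one_mul] at habt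
    refine ⟨t⁻¹, inv_ne_zero ht, ?_⟩
    rw [inv_pow, ← habt]
    field_simp
  have h41 : (univ.filter fun x : ZMod p => Qc 1 x ∧ 1 + x = 0).card = 1 := by
    have : (univ.filter fun x : ZMod p => Qc 1 x ∧ 1 + x = 0) = {-1} := by
      ext x
      simp only [mem_filter, mem_univ, true_and, mem_singleton]
      constructor
      · intro h
        exact eq_neg_of_add_eq_zero_right h.2
      · intro h
        subst h
        exact ⟨⟨-1, neg_ne_zero.2 one_ne_zero, by ring⟩, by ring⟩
    rw [this, card_singleton]
  have h4a : (univ.filter fun x : ZMod p => Qc a x ∧ 1 + x = 0).card = 0 := by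
    rw [card_eq_zero]
    rw [filter_eq_empty_iff]
    rintro x - ⟨hq, h0⟩
    have hx : x = -1 := eq_neg_of_add_eq_zero_right h0
    subst hx
    obtain ⟨t, ht, heq⟩ := hq
    refine hA ⟨-t⁻¹, neg_ne_zero.2 (inv_ne_zero ht), ?_⟩
    have ht3 : t ^ 3 ≠ 0 := pow_ne_zero _ ht
    apply mul_right_cancel₀ ht3
    field_simp
    linear_combination -heq
  have hrow1 := row (p := p) 1 ha hb hA hB hAB
  have hrowa := row (p := p) a ha hb hA hB hAB
  rw [h41] at hrow1
  rw [h4a, add_zero] at hrowa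
  rw [card_Qc_filter a ha] at hrowa
  have e1 : nn a 1 = nn 1 a := nn_symm a 1
  have e2 : nn a a = nn 1 b := by
    have := nn_inv a a ha ha
    rw [mul_inv_cancel₀ ha] at this
    rw [this, nn_symm a⁻¹ 1, nn_congr 1 hIa]
  have hpos : 0 < nn a b := by omega
  rw [nn] at hpos
  obtain ⟨x, hx⟩ := card_pos.1 hpos
  simp only [mem_filter, mem_univ, true_and] at hx
  obtain ⟨⟨y, hy, hxy⟩, ⟨s, hs, hss⟩⟩ := hx
  refine ⟨y, -s, ?_⟩
  have : (-s) ^ 3 = -s ^ 3 := by ring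
  rw [this]
  linear_combination hss - hxy + (hxy.symm.trans hxy)

lemma modp_sol (a b c : ZMod p) (ha : a ≠ 0) (hb : b ≠ 0) (hc : c ≠ 0) :
    ∃ x y z : ZMod p, a * x ^ 3 + b * y ^ 3 + c * z ^ 3 = 0
      ∧ ¬(x = 0 ∧ y = 0 ∧ z = 0) := by
  by_cases h1 : Qc b (-a)
  · obtain ⟨t, ht, heq⟩ := h1
    exact ⟨1, t, 0, by linear_combination -heq, by simp⟩
  by_cases h2 : Qc c (-a)
  · obtain ⟨t, ht, heq⟩ := h2
    exact ⟨1, 0, t, by linear_combination -heq, by simp⟩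
  by_cases h3 : Qc c (-b)
  · obtain ⟨t, ht, heq⟩ := h3
    exact ⟨0, 1, t, by linear_combination -heq, by simp⟩
  have ha' : b * a⁻¹ ≠ 0 := mul_ne_zero hb (inv_ne_zero ha)
  have hb' : c * a⁻¹ ≠ 0 := mul_ne_zero hc (inv_ne_zero ha)
  have hA' : ¬ Qc 1 (b * a⁻¹) := by
    rintro ⟨t, ht, hh⟩
    refine h1 ⟨-t⁻¹, neg_ne_zero.2 (inv_ne_zero ht), ?_⟩
    have h4 : b = t ^ 3 * a := by
      field_simp at hh
      linear_combination hh
    rw [h4]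
    field_simp
  have hB' : ¬ Qc 1 (c * a⁻¹) := by
    rintro ⟨t, ht, hh⟩
    refine h2 ⟨-t⁻¹, neg_ne_zero.2 (inv_ne_zero ht), ?_⟩
    have h4 : c = t ^ 3 * a := by
      field_simp at hh
      linear_combination hh
    rw [h4]
    field_simp
  have hAB' : ¬ Qc (c * a⁻¹) (b * a⁻¹) := by
    rintro ⟨t, ht, hh⟩
    refine h3 ⟨-t, neg_ne_zero.2 ht, ?_⟩
    have h4 : b = c * t ^ 3 := by
      field_simp at hh
      linear_combination hh
    rw [h4]
    ring
  obtain ⟨y, z, hyz⟩ := key_count ha' hb' hA' hB' hAB'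
  have h5 : a * (1 + b * a⁻¹ * y ^ 3 + c * a⁻¹ * z ^ 3) = 0 := by
    rw [hyz, mul_zero]
  have h6 : a + b * y ^ 3 + c * z ^ 3 = 0 := by
    field_simp [ha] at h5
    linear_combination h5
  exact ⟨1, y, z, by linear_combination h6, by simp⟩

lemma lift_sol (hp3 : p ≠ 3) (a b c : ℕ) (hc : ¬ p ∣ c)
    (x y z : ZMod p) (hz : z ≠ 0)
    (h : (a : ZMod p) * x ^ 3 + (b : ZMod p) * y ^ 3 + (c : ZMod p) * z ^ 3 = 0) :
    ∃ X Y Z : ℚ_[p], Z ≠ 0 ∧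
      (a : ℚ_[p]) * X ^ 3 + (b : ℚ_[p]) * Y ^ 3 + (c : ℚ_[p]) * Z ^ 3 = 0 := by
  have hp := Fact.out (p := p.Prime)
  set k : ℤ_[p] := (a : ℤ_[p]) * ((x.val : ℤ) : ℤ_[p]) ^ 3
      + (b : ℤ_[p]) * ((y.val : ℤ) : ℤ_[p]) ^ 3 with hk
  set F : Polynomial ℤ_[p] := Polynomial.C k + Polynomial.C (c : ℤ_[p]) * Polynomial.X ^ 3
    with hF
  set a₀ : ℤ_[p] := ((z.val : ℤ) : ℤ_[p]) with ha₀
  have hFeval : ∀ w : ℤ_[p], F.eval w = k + (c : ℤ_[p]) * w ^ 3 := by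
    intro w; simp [hF]
  have hFderiv : F.derivative.eval a₀ = (c : ℤ_[p]) * 3 * a₀ ^ 2 := by
    simp [hF]
    ring
  have hza : ¬ (p : ℤ) ∣ (z.val : ℤ) := by
    rw [Int.natCast_dvd_natCast]
    intro hd
    have hv0 : z.val ≠ 0 := fun h0 => hz ((ZMod.val_eq_zero _).1 h0)
    exact absurd (Nat.le_of_dvd (Nat.pos_of_ne_zero hv0) hd) (not_le.2 (ZMod.val_lt z))
  have hnz : ‖a₀‖ = 1 := by
    refine le_antisymm (PadicInt.norm_le_one _) (not_lt.1 ?_)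
    rw [ha₀, PadicInt.norm_int_lt_one_iff_dvd]
    exact hza
  have hnc : ‖(c : ℤ_[p])‖ = 1 := by
    refine le_antisymm (PadicInt.norm_le_one _) (not_lt.1 ?_)
    have : ((c : ℤ) : ℤ_[p]) = (c : ℤ_[p]) := by push_cast; rfl
    rw [← this, PadicInt.norm_int_lt_one_iff_dvd]
    rwa [Int.natCast_dvd_natCast]
  have hn3 : ‖(3 : ℤ_[p])‖ = 1 := by
    refine le_antisymm (PadicInt.norm_le_one _) (not_lt.1 ?_)
    have : ((3 : ℤ) : ℤ_[p]) = (3 : ℤ_[p]) := by push_cast; rfl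
    rw [← this, PadicInt.norm_int_lt_one_iff_dvd]
    intro hd
    have hd2 : p ∣ 3 := by exact_mod_cast hd
    exact hp3 ((Nat.prime_dvd_prime_iff_eq hp (by norm_num)).1 hd2)
  have hnd : ‖F.derivative.eval a₀‖ = 1 := by
    rw [hFderiv, norm_mul, norm_mul, norm_pow, hnz, hnc, hn3]
    norm_num
  have hNdvd : (p : ℤ) ∣ ((a : ℤ) * (x.val : ℤ) ^ 3 + (b : ℤ) * (y.val : ℤ) ^ 3
      + (c : ℤ) * (z.val : ℤ) ^ 3) := by
    have hcast : (((a : ℤ) * (x.val : ℤ) ^ 3 + (b : ℤ) * (y.val : ℤ) ^ 3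
        + (c : ℤ) * (z.val : ℤ) ^ 3 : ℤ) : ZMod p) = 0 := by
      push_cast
      rw [ZMod.natCast_zmod_val, ZMod.natCast_zmod_val, ZMod.natCast_zmod_val]
      exact h
    rwa [ZMod.intCast_zmod_eq_zero_iff_dvd] at hcast
  have hnorm : ‖F.eval a₀‖ < ‖F.derivative.eval a₀‖ ^ 2 := by
    rw [hnd, one_pow, hFeval]
    have heq2 : k + (c : ℤ_[p]) * a₀ ^ 3
        = (((a : ℤ) * (x.val : ℤ) ^ 3 + (b : ℤ) * (y.val : ℤ) ^ 3
          + (c : ℤ) * (z.val : ℤ) ^ 3 : ℤ) : ℤ_[p]) := by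
      rw [hk, ha₀]
      push_cast
      ring
    rw [heq2, PadicInt.norm_int_lt_one_iff_dvd]
    exact hNdvd
  obtain ⟨t, htroot, htdist, -, -⟩ := hensels_lemma (F := F) (a := a₀) hnorm
  have ht0 : t ≠ 0 := by
    intro h0
    rw [h0, zero_sub, norm_neg, hnz, coe_aeval_eq_eval, hnd] at htdist
    exact lt_irrefl _ htdist
  refine ⟨((x.val : ℤ) : ℚ_[p]), ((y.val : ℤ) : ℚ_[p]), (t : ℚ_[p]), ?_, ?_⟩
  · exact PadicInt.coe_ne_zero.2 ht0
  · have heval := hFeval t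
    rw [coe_aeval_eq_eval] at htroot
    rw [htroot] at heval
    have hQ := congrArg (fun w : ℤ_[p] => (w : ℚ_[p])) heval
    simp only [hk, PadicInt.coe_add, PadicInt.coe_mul, PadicInt.coe_pow,
      PadicInt.coe_natCast, PadicInt.coe_intCast, PadicInt.coe_zero] at hQ
    push_cast at hQ ⊢
    linear_combination -hQ

end LocalCubic

/-- for pairwise coprime cubefree positive integers `u₁, u₂, u₃` and a
prime `p ≠ 3` not dividing `u₁u₂u₃`, the equation `u₁X³ + u₂Y³ + u₃Z³ = 0` has a
nontrivial solution in `ℚ_p`. -/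
theorem local_solvable_good_prime (u₁ u₂ u₃ : ℕ)
    (h₁ : 0 < u₁) (h₂ : 0 < u₂) (h₃ : 0 < u₃)
    (hcf₁ : ∀ p : ℕ, p.Prime → ¬ p ^ 3 ∣ u₁)
    (hcf₂ : ∀ p : ℕ, p.Prime → ¬ p ^ 3 ∣ u₂)
    (hcf₃ : ∀ p : ℕ, p.Prime → ¬ p ^ 3 ∣ u₃)
    (hco₁₂ : Nat.Coprime u₁ u₂) (hco₁₃ : Nat.Coprime u₁ u₃) (hco₂₃ : Nat.Coprime u₂ u₃)
    (p : ℕ) [Fact p.Prime] (hp3 : p ≠ 3) (hpu : ¬ p ∣ u₁ * u₂ * u₃) :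
    ∃ X Y Z : ℚ_[p], (X, Y, Z) ≠ (0, 0, 0) ∧
      (u₁ : ℚ_[p]) * X ^ 3 + (u₂ : ℚ_[p]) * Y ^ 3 + (u₃ : ℚ_[p]) * Z ^ 3 = 0 := by
  have hd1 : ¬ p ∣ u₁ := fun h => hpu ((h.mul_right u₂).mul_right u₃)
  have hd2 : ¬ p ∣ u₂ := fun h => hpu ((h.mul_left u₁).mul_right u₃)
  have hd3 : ¬ p ∣ u₃ := fun h => hpu (h.mul_left (u₁ * u₂))
  have hz1 : (u₁ : ZMod p) ≠ 0 := fun h =>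
    hd1 ((ZMod.natCast_eq_zero_iff _ _).1 h)
  have hz2 : (u₂ : ZMod p) ≠ 0 := fun h =>
    hd2 ((ZMod.natCast_eq_zero_iff _ _).1 h)
  have hz3 : (u₃ : ZMod p) ≠ 0 := fun h =>
    hd3 ((ZMod.natCast_eq_zero_iff _ _).1 h)
  obtain ⟨x, y, z, heq, hnt⟩ := LocalCubic.modp_sol (u₁ : ZMod p) (u₂ : ZMod p)
    (u₃ : ZMod p) hz1 hz2 hz3
  by_cases hzz : z = 0
  · by_cases hyy : y = 0
    · have hxx : x ≠ 0 := fun hx => hnt ⟨hx, hyy, hzz⟩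
      obtain ⟨A, B, C, hC, hE⟩ := LocalCubic.lift_sol hp3 u₂ u₃ u₁ hd1 y z x hxx
        (by linear_combination heq)
      refine ⟨C, A, B, ?_, by linear_combination hE⟩
      intro h0
      exact hC (congrArg (fun t => t.1) h0)
    · obtain ⟨A, B, C, hC, hE⟩ := LocalCubic.lift_sol hp3 u₁ u₃ u₂ hd2 x z y hyy
        (by linear_combination heq)
      refine ⟨A, C, B, ?_, by linear_combination hE⟩
      intro h0
      exact hC (congrArg (fun t => t.2.1) h0)
  · obtain ⟨A, B, C, hC, hE⟩ := LocalCubic.lift_sol hp3 u₁ u₂ u₃ hd3 x y z hzz heq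
    refine ⟨A, B, C, ?_, by linear_combination hE⟩
    intro h0
    exact hC (congrArg (fun t => t.2.2) h0)
end

section
/- Let (u_1, u_2, u_3) be pairwise coprime cubefree positive integers and let p ≠ 3 be a prime with p | u_1. Then the equation u_1 X³ + u_2 Y³ + u_3 Z³ = 0 has a nontrivial solution over Q_p if and only if the residue class of u_2/u_3 is a cube in F_p^×. -/
variable {p' : ℕ} [Fact p'.Prime]

private lemma padic_val_neg (x : ℚ_[p']) : (-x).valuation = x.valuation := by
  by_cases hx : x = 0
  · simp [hx]
  · have hm : ((-1 : ℚ_[p'])).valuation = 0 := by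
      rw [show (-1 : ℚ_[p']) = ((-1 : ℤ) : ℚ_[p']) by push_cast; ring, Padic.valuation_intCast]
      simp [padicValInt]
    rw [show -x = (-1 : ℚ_[p']) * x by ring,
      Padic.valuation_mul (by norm_num) hx, hm, zero_add]

private lemma padic_val_cube {x : ℚ_[p']} (hx : x ≠ 0) : (x ^ 3).valuation = 3 * x.valuation := by
  rw [show x ^ 3 = x * x * x by ring, Padic.valuation_mul (mul_ne_zero hx hx) hx,
    Padic.valuation_mul hx hx]
  ring

private lemma padic_val_add_eq_left {x y : ℚ_[p']} (hx : x ≠ 0)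
    (h : x.valuation < y.valuation) : x + y ≠ 0 ∧ (x + y).valuation = x.valuation := by
  have hne : x + y ≠ 0 := by
    intro h0
    have hyx : y = -x := by linear_combination h0
    rw [hyx, padic_val_neg] at h
    exact lt_irrefl _ h
  refine ⟨hne, le_antisymm ?_ ?_⟩
  · by_contra hlt
    push_neg at hlt
    have h2 := Padic.le_valuation_add (p := p') (x := x + y) (y := -y) (by simpa using hx)
    rw [add_neg_cancel_right, padic_val_neg] at h2
    have : x.valuation < min (x + y).valuation y.valuation := lt_min hlt h
    omega
  · have h2 := Padic.le_valuation_add (p := p') (x := x) (y := y) hne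
    rw [min_eq_left h.le] at h2
    exact h2

private lemma padicint_toZMod_zero_iff (z : ℤ_[p']) :
    PadicInt.toZMod z = 0 ↔ ‖z‖ < 1 := by
  rw [← RingHom.mem_ker, PadicInt.ker_toZMod, PadicInt.maximalIdeal_eq_span_p,
    Ideal.mem_span_singleton, ← PadicInt.norm_lt_one_iff_dvd]

private lemma padicint_norm_eq_one (z : ℤ_[p']) (h : PadicInt.toZMod z ≠ 0) : ‖z‖ = 1 := by
  refine le_antisymm (PadicInt.norm_le_one z) ?_
  by_contra hlt
  push_neg at hlt
  exact h ((padicint_toZMod_zero_iff z).2 hlt)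

private lemma padicint_norm_natCast (n : ℕ) (h : ¬ p' ∣ n) : ‖(n : ℤ_[p'])‖ = 1 := by
  refine padicint_norm_eq_one _ ?_
  rw [map_natCast, Ne, ZMod.natCast_eq_zero_iff]
  exact h

/-- for pairwise coprime cubefree positive integers `u₁, u₂, u₃` and a
prime `p ≠ 3` dividing `u₁`, the equation `u₁X³ + u₂Y³ + u₃Z³ = 0` has a nontrivial
solution in `ℚ_p` iff `u₂/u₃` is a cube in `F_p^×`. -/
theorem local_solvable_bad_prime (u₁ u₂ u₃ : ℕ)
    (h₁ : 0 < u₁) (h₂ : 0 < u₂) (h₃ : 0 < u₃)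
    (hcf₁ : ∀ p : ℕ, p.Prime → ¬ p ^ 3 ∣ u₁)
    (hcf₂ : ∀ p : ℕ, p.Prime → ¬ p ^ 3 ∣ u₂)
    (hcf₃ : ∀ p : ℕ, p.Prime → ¬ p ^ 3 ∣ u₃)
    (hco₁₂ : Nat.Coprime u₁ u₂) (hco₁₃ : Nat.Coprime u₁ u₃) (hco₂₃ : Nat.Coprime u₂ u₃)
    (p : ℕ) [Fact p.Prime] (hp3 : p ≠ 3) (hpu : p ∣ u₁) :
    (∃ X Y Z : ℚ_[p], (X, Y, Z) ≠ (0, 0, 0) ∧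
      (u₁ : ℚ_[p]) * X ^ 3 + (u₂ : ℚ_[p]) * Y ^ 3 + (u₃ : ℚ_[p]) * Z ^ 3 = 0) ↔
    (∃ x : (ZMod p)ˣ, (x : ZMod p) ^ 3 = (u₂ : ZMod p) * (u₃ : ZMod p)⁻¹) := by
  have hp : p.Prime := Fact.out
  haveI : NeZero p := ⟨hp.pos.ne'⟩
  -- basic divisibility facts
  have hpu₂ : ¬ p ∣ u₂ := by
    intro h
    have : p ∣ Nat.gcd u₁ u₂ := Nat.dvd_gcd hpu h
    rw [hco₁₂] at this
    exact hp.ne_one (Nat.dvd_one.mp this)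
  have hpu₃ : ¬ p ∣ u₃ := by
    intro h
    have : p ∣ Nat.gcd u₁ u₃ := Nat.dvd_gcd hpu h
    rw [hco₁₃] at this
    exact hp.ne_one (Nat.dvd_one.mp this)
  have hu₂z : (u₂ : ZMod p) ≠ 0 := by
    rw [Ne, ZMod.natCast_eq_zero_iff]; exact hpu₂
  have hu₃z : (u₃ : ZMod p) ≠ 0 := by
    rw [Ne, ZMod.natCast_eq_zero_iff]; exact hpu₃
  have hu₁Q : (u₁ : ℚ_[p]) ≠ 0 := Nat.cast_ne_zero.2 h₁.ne'
  have hu₂Q : (u₂ : ℚ_[p]) ≠ 0 := Nat.cast_ne_zero.2 h₂.ne'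
  have hu₃Q : (u₃ : ℚ_[p]) ≠ 0 := Nat.cast_ne_zero.2 h₃.ne'
  set e : ℕ := padicValNat p u₁ with he
  have he1 : 1 ≤ e := one_le_padicValNat_of_dvd h₁.ne' hpu
  have he2 : e ≤ 2 := by
    by_contra h
    push_neg at h
    exact hcf₁ p hp ((pow_dvd_pow p h).trans pow_padicValNat_dvd)
  have hvu₁ : (u₁ : ℚ_[p]).valuation = e := by rw [Padic.valuation_natCast]
  have hvu₂ : (u₂ : ℚ_[p]).valuation = 0 := by
    rw [Padic.valuation_natCast, padicValNat.eq_zero_of_not_dvd hpu₂, Int.ofNat_zero]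
  have hvu₃ : (u₃ : ℚ_[p]).valuation = 0 := by
    rw [Padic.valuation_natCast, padicValNat.eq_zero_of_not_dvd hpu₃, Int.ofNat_zero]
  constructor
  · rintro ⟨X, Y, Z, hnt, heq⟩
    -- Y ≠ 0
    have hY : Y ≠ 0 := by
      intro hY0
      rw [hY0] at heq hnt
      have h' : (u₃ : ℚ_[p]) * Z ^ 3 = -((u₁ : ℚ_[p]) * X ^ 3) := by linear_combination heq
      by_cases hX : X = 0
      · rw [hX] at h' hnt
        simp only [zero_pow, mul_zero, ne_eq, OfNat.ofNat_ne_zero, not_false_eq_true,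
          neg_zero] at h'
        have hZ : Z = 0 := by
          have := mul_eq_zero.mp h'
          rcases this with h | h
          · exact absurd h hu₃Q
          · exact pow_eq_zero_iff (by norm_num) |>.mp h
        exact hnt (by simp [hZ])
      · have hZ : Z ≠ 0 := by
          intro hZ0
          rw [hZ0] at h'
          simp only [ne_eq, OfNat.ofNat_ne_zero, not_false_eq_true, zero_pow, mul_zero,
            zero_eq_neg] at h'
          exact (mul_ne_zero hu₁Q (pow_ne_zero _ hX)) h'
        have v1 : ((u₃ : ℚ_[p]) * Z ^ 3).valuation = 3 * Z.valuation := by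
          rw [Padic.valuation_mul hu₃Q (pow_ne_zero _ hZ), padic_val_cube hZ, hvu₃, zero_add]
        have v2 : (-((u₁ : ℚ_[p]) * X ^ 3)).valuation = (e : ℤ) + 3 * X.valuation := by
          rw [padic_val_neg, Padic.valuation_mul hu₁Q (pow_ne_zero _ hX),
            padic_val_cube hX, hvu₁]
        rw [h', v2] at v1
        omega
    -- Z ≠ 0
    have hZ : Z ≠ 0 := by
      intro hZ0
      rw [hZ0] at heq hnt
      have h' : (u₂ : ℚ_[p]) * Y ^ 3 = -((u₁ : ℚ_[p]) * X ^ 3) := by linear_combination heq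
      by_cases hX : X = 0
      · rw [hX] at h'
        simp only [ne_eq, OfNat.ofNat_ne_zero, not_false_eq_true, zero_pow, mul_zero,
          neg_zero] at h'
        rcases mul_eq_zero.mp h' with h | h
        · exact hu₂Q h
        · exact hY (pow_eq_zero_iff (by norm_num) |>.mp h)
      · have v1 : ((u₂ : ℚ_[p]) * Y ^ 3).valuation = 3 * Y.valuation := by
          rw [Padic.valuation_mul hu₂Q (pow_ne_zero _ hY), padic_val_cube hY, hvu₂, zero_add]
        have v2 : (-((u₁ : ℚ_[p]) * X ^ 3)).valuation = (e : ℤ) + 3 * X.valuation := by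
          rw [padic_val_neg, Padic.valuation_mul hu₁Q (pow_ne_zero _ hX),
            padic_val_cube hX, hvu₁]
        rw [h', v2] at v1
        omega
    set s : ℚ_[p] := X / Z with hs
    set r : ℚ_[p] := Y / Z with hr
    have hrne : r ≠ 0 := div_ne_zero hY hZ
    have heq2 : (u₁ : ℚ_[p]) * s ^ 3 + u₂ * r ^ 3 + u₃ = 0 := by
      have hZ3 : Z ^ 3 ≠ 0 := pow_ne_zero _ hZ
      rw [hs, hr]
      field_simp
      linear_combination heq
    -- valuation of r is 0, valuation of s ≥ 0
    have hvr : r.valuation = 0 ∧ (X ≠ 0 → 0 ≤ s.valuation) := by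
      by_cases hX : X = 0
      · refine ⟨?_, fun h => absurd hX h⟩
        have hs0 : s = 0 := by rw [hs, hX, zero_div]
        rw [hs0] at heq2
        have h' : (u₂ : ℚ_[p]) * r ^ 3 = -(u₃ : ℚ_[p]) := by linear_combination heq2
        have := congrArg Padic.valuation h'
        rw [Padic.valuation_mul hu₂Q (pow_ne_zero _ hrne), padic_val_cube hrne, hvu₂,
          padic_val_neg, hvu₃] at this
        omega
      · have hsne : s ≠ 0 := div_ne_zero hX hZ
        set a : ℚ_[p] := (u₁ : ℚ_[p]) * s ^ 3 with ha
        have hane : a ≠ 0 := mul_ne_zero hu₁Q (pow_ne_zero _ hsne)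
        have hva : a.valuation = (e : ℤ) + 3 * s.valuation := by
          rw [ha, Padic.valuation_mul hu₁Q (pow_ne_zero _ hsne), padic_val_cube hsne, hvu₁]
        have key : (u₂ : ℚ_[p]) * r ^ 3 = -(a + u₃) := by rw [ha]; linear_combination heq2
        have hvanz : a.valuation ≠ 0 := by omega
        have hsum : a + (u₃ : ℚ_[p]) ≠ 0 ∧
            (a + (u₃ : ℚ_[p])).valuation = min a.valuation 0 := by
          rcases lt_or_gt_of_ne hvanz with h | h
          · have := padic_val_add_eq_left hane (y := (u₃ : ℚ_[p])) (by rw [hvu₃]; exact h)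
            rw [min_eq_left (by omega)]
            exact this
          · have h' := padic_val_add_eq_left hu₃Q (y := a) (by rw [hvu₃]; exact h)
            rw [hvu₃] at h'
            constructor
            · rw [add_comm]; exact h'.1
            · rw [add_comm, min_eq_right (by omega)]; exact h'.2
        have hval : 3 * r.valuation = min a.valuation 0 := by
          have := congrArg Padic.valuation key
          rw [Padic.valuation_mul hu₂Q (pow_ne_zero _ hrne), padic_val_cube hrne, hvu₂,
            padic_val_neg, hsum.2, zero_add] at this
          exact this
        have hr0 : r.valuation = 0 := by
          rcases le_or_gt a.valuation 0 with h | h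
          · rw [min_eq_left h] at hval; omega
          · rw [min_eq_right h.le] at hval; omega
        refine ⟨hr0, fun _ => ?_⟩
        -- show 0 ≤ s.valuation
        by_contra hslt
        push_neg at hslt
        have h1 : a.valuation < 0 := by omega
        have h2 : (u₂ : ℚ_[p]) * r ^ 3 + (u₃ : ℚ_[p]) ≠ 0 := by
          intro h0
          have : a = 0 := by linear_combination heq2 - h0
          exact hane this
        have h3 := Padic.le_valuation_add (p := p) (x := (u₂ : ℚ_[p]) * r ^ 3)
          (y := (u₃ : ℚ_[p])) h2
        have h4 : a = -((u₂ : ℚ_[p]) * r ^ 3 + u₃) := by rw [ha]; linear_combination heq2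
        have h5 : a.valuation = ((u₂ : ℚ_[p]) * r ^ 3 + (u₃ : ℚ_[p])).valuation := by
          rw [h4, padic_val_neg]
        rw [Padic.valuation_mul hu₂Q (pow_ne_zero _ hrne), padic_val_cube hrne, hvu₂, hvu₃,
          hr0] at h3
        simp only [zero_add, mul_zero, min_self] at h3
        omega
    -- move into ℤ_[p]
    have hrnorm : ‖r‖ ≤ 1 := by
      rw [Padic.norm_le_one_iff_val_nonneg, hvr.1]
    have hsnorm : ‖s‖ ≤ 1 := by
      by_cases hX : X = 0
      · rw [hs, hX, zero_div, norm_zero]; norm_num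
      · rw [Padic.norm_le_one_iff_val_nonneg]; exact hvr.2 hX
    set R : ℤ_[p] := ⟨r, hrnorm⟩ with hR
    set S : ℤ_[p] := ⟨s, hsnorm⟩ with hS
    have heqZ : (u₁ : ℤ_[p]) * S ^ 3 + u₂ * R ^ 3 + u₃ = 0 := by
      apply Subtype.ext
      push_cast
      show (u₁ : ℚ_[p]) * s ^ 3 + u₂ * r ^ 3 + u₃ = 0
      exact heq2
    have hz := congrArg PadicInt.toZMod heqZ
    simp only [map_add, map_mul, map_pow, map_natCast, map_zero] at hz
    rw [(ZMod.natCast_eq_zero_iff u₁ p).2 hpu, zero_mul, zero_add] at hz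
    set w : ZMod p := PadicInt.toZMod R with hw
    have hw3 : (u₂ : ZMod p) * w ^ 3 = -(u₃ : ZMod p) := by linear_combination hz
    have hwne : w ≠ 0 := by
      intro h0
      rw [h0] at hw3
      simp only [ne_eq, OfNat.ofNat_ne_zero, not_false_eq_true, zero_pow, mul_zero,
        zero_eq_neg] at hw3
      exact hu₃z hw3
    refine ⟨Units.mk0 (-(w⁻¹)) (by simp [hwne]), ?_⟩
    rw [Units.val_mk0]
    field_simp
    linear_combination (-1 : ZMod p) * hw3
  · rintro ⟨x, hx⟩
    set w : ZMod p := -((x⁻¹ : (ZMod p)ˣ) : ZMod p) with hw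
    have hxne : ((x : ZMod p)) ≠ 0 := x.ne_zero
    have hw3 : (u₂ : ZMod p) * w ^ 3 + u₃ = 0 := by
      have hx' : (x : ZMod p) ^ 3 * u₃ = u₂ := by
        rw [hx]
        field_simp
      rw [hw, Units.val_inv_eq_inv_val]
      field_simp
      linear_combination hx'
    have hwne : w ≠ 0 := by
      rw [hw, neg_ne_zero]
      exact Units.ne_zero _
    set a : ℤ_[p] := ((ZMod.val w : ℕ) : ℤ_[p]) with ha
    have hta : PadicInt.toZMod a = w := by
      rw [ha, map_natCast]
      exact ZMod.natCast_rightInverse w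
    have hna : ‖a‖ = 1 := padicint_norm_eq_one a (by rw [hta]; exact hwne)
    have hnu₂ : ‖(u₂ : ℤ_[p])‖ = 1 := padicint_norm_natCast u₂ hpu₂
    have hn3 : ‖(3 : ℤ_[p])‖ = 1 := by
      rw [show (3 : ℤ_[p]) = ((3 : ℕ) : ℤ_[p]) by norm_cast]
      refine padicint_norm_natCast 3 ?_
      intro h
      exact hp3 ((Nat.prime_dvd_prime_iff_eq hp (by norm_num)).mp h)
    set F : Polynomial ℤ_[p] :=
      Polynomial.C (u₂ : ℤ_[p]) * Polynomial.X ^ 3 + Polynomial.C (u₃ : ℤ_[p]) with hF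
    have hFeval : ∀ z : ℤ_[p], F.eval z = u₂ * z ^ 3 + u₃ := by
      intro z; simp [hF]
    have hFderiv : ∀ z : ℤ_[p], (Polynomial.derivative F).eval z = u₂ * (3 * z ^ 2) := by
      intro z
      simp [hF]; norm_num
    have hnorm : ‖F.eval a‖ < ‖(Polynomial.derivative F).eval a‖ ^ 2 := by
      have h1 : ‖(Polynomial.derivative F).eval a‖ = 1 := by
        rw [hFderiv, norm_mul, norm_mul, norm_pow, hna, hnu₂, hn3]
        norm_num
      rw [h1, one_pow, hFeval]
      rw [← padicint_toZMod_zero_iff]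
      simp only [map_add, map_mul, map_pow, map_natCast, hta]
      exact hw3
    obtain ⟨z, hzeval, -⟩ := hensels_lemma hnorm
    rw [Polynomial.coe_aeval_eq_eval, hFeval] at hzeval
    refine ⟨0, (z : ℚ_[p]), 1, ?_, ?_⟩
    · simp only [ne_eq, Prod.mk.injEq, not_and]
      intro _ _
      exact one_ne_zero
    · have := congrArg (fun t : ℤ_[p] => (t : ℚ_[p])) hzeval
      push_cast at this
      push_cast
      linear_combination this
end

section
/- Let (u_1, u_2, u_3) be pairwise coprime cubefree positive integers with v_3(u_1) = 1 (and hence 3 ∤ u_2 u_3). Then the equation u_1 X³ + u_2 Y³ + u_3 Z³ = 0 has a nontrivial solution over Q_3. -/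
set_option maxHeartbeats 2000000 in
private lemma key_fin' : ∀ m : Fin 9, ∀ b c : Fin 27, m.val % 3 ≠ 0 → b.val % 3 ≠ 0 →
    c.val % 3 ≠ 0 → ∃ x : Fin 3, ∃ d : Fin 2, ∃ k : Fin 3,
      (b.val * (d.val + 1 + 3 * k.val) ^ 3 + c.val + 3 * m.val * x.val ^ 3) % 27 = 0 := by
  decide

private lemma key_nat' (m b c : ℕ) (hm : m % 3 ≠ 0) (hb : b % 3 ≠ 0) (hc : c % 3 ≠ 0) :
    ∃ x y : ℕ, y % 3 ≠ 0 ∧ (b * y ^ 3 + c + 3 * m * x ^ 3) % 27 = 0 := by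
  obtain ⟨x, d, k, h⟩ := key_fin' ⟨m % 9, Nat.mod_lt _ (by norm_num)⟩
    ⟨b % 27, Nat.mod_lt _ (by norm_num)⟩ ⟨c % 27, Nat.mod_lt _ (by norm_num)⟩
    (by simpa [Nat.mod_mod_of_dvd m (by norm_num : (3:ℕ) ∣ 9)] using hm)
    (by simpa [Nat.mod_mod_of_dvd b (by norm_num : (3:ℕ) ∣ 27)] using hb)
    (by simpa [Nat.mod_mod_of_dvd c (by norm_num : (3:ℕ) ∣ 27)] using hc)
  refine ⟨x.val, d.val + 1 + 3 * k.val, by omega, ?_⟩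
  have h1 : b % 27 * (d.val + 1 + 3 * k.val) ^ 3 ≡ b * (d.val + 1 + 3 * k.val) ^ 3 [MOD 27] :=
    (Nat.mod_modEq b 27).mul_right _
  have h2 : c % 27 ≡ c [MOD 27] := Nat.mod_modEq c 27
  have h3 : 3 * (m % 9) * x.val ^ 3 ≡ 3 * m * x.val ^ 3 [MOD 27] :=
    ((Nat.mod_modEq m 9).mul_left' (c := 3)).mul_right _
  have h4 := (h1.add h2).add h3
  unfold Nat.ModEq at h4
  simp only at h
  omega

/-- for pairwise coprime cubefree positive integers `u₁, u₂, u₃` with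
`v₃(u₁) = 1`, the equation `u₁X³ + u₂Y³ + u₃Z³ = 0` has a nontrivial solution in `ℚ₃`. -/
theorem local_solvable_three_val_one (u₁ u₂ u₃ : ℕ)
    (h₁ : 0 < u₁) (h₂ : 0 < u₂) (h₃ : 0 < u₃)
    (hcf₁ : ∀ p : ℕ, p.Prime → ¬ p ^ 3 ∣ u₁)
    (hcf₂ : ∀ p : ℕ, p.Prime → ¬ p ^ 3 ∣ u₂)
    (hcf₃ : ∀ p : ℕ, p.Prime → ¬ p ^ 3 ∣ u₃)
    (hco₁₂ : Nat.Coprime u₁ u₂) (hco₁₃ : Nat.Coprime u₁ u₃) (hco₂₃ : Nat.Coprime u₂ u₃)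
    (hval : padicValNat 3 u₁ = 1) :
    ∃ X Y Z : ℚ_[3], (X, Y, Z) ≠ (0, 0, 0) ∧
      (u₁ : ℚ_[3]) * X ^ 3 + (u₂ : ℚ_[3]) * Y ^ 3 + (u₃ : ℚ_[3]) * Z ^ 3 = 0 := by
  have h3u1 : 3 ∣ u₁ := by
    have := pow_padicValNat_dvd (p := 3) (n := u₁)
    rwa [hval, pow_one] at this
  have h9 : ¬ (9 : ℕ) ∣ u₁ := by
    have := pow_succ_padicValNat_not_dvd (p := 3) h₁.ne'
    rw [hval] at this
    intro hd; exact this (by omega)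
  obtain ⟨m, hm⟩ := h3u1
  have hm3 : m % 3 ≠ 0 := by intro h; exact h9 (by omega)
  have h3u2 : u₂ % 3 ≠ 0 := by
    intro h
    have : (3:ℕ) ∣ Nat.gcd u₁ u₂ := Nat.dvd_gcd ⟨m, hm⟩ (Nat.dvd_of_mod_eq_zero h)
    rw [hco₁₂] at this; omega
  have h3u3 : u₃ % 3 ≠ 0 := by
    intro h
    have : (3:ℕ) ∣ Nat.gcd u₁ u₃ := Nat.dvd_gcd ⟨m, hm⟩ (Nat.dvd_of_mod_eq_zero h)
    rw [hco₁₃] at this; omega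
  obtain ⟨x, y, hy, hmod⟩ := key_nat' m u₂ u₃ hm3 h3u2 h3u3
  have hdvd : (27 : ℕ) ∣ u₂ * y ^ 3 + u₃ + u₁ * x ^ 3 := by
    rw [hm]; exact Nat.dvd_of_mod_eq_zero hmod
  -- Hensel's lemma in ℤ_[3]
  set A : ℤ_[3] := ((u₃ + u₁ * x ^ 3 : ℕ) : ℤ_[3]) with hA
  set F : Polynomial ℤ_[3] :=
    Polynomial.C ((u₂ : ℕ) : ℤ_[3]) * Polynomial.X ^ 3 + Polynomial.C A with hF
  set a : ℤ_[3] := ((y : ℕ) : ℤ_[3]) with ha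
  have heval : F.eval a = ((u₂ * y ^ 3 + u₃ + u₁ * x ^ 3 : ℕ) : ℤ_[3]) := by
    simp only [hF, hA, Polynomial.eval_add, Polynomial.eval_mul, Polynomial.eval_C,
      Polynomial.eval_pow, Polynomial.eval_X]
    push_cast; ring
  have hnormeval : ‖F.eval a‖ ≤ ((3:ℕ) : ℝ) ^ (-(3:ℕ) : ℤ) := by
    rw [heval, show ((u₂ * y ^ 3 + u₃ + u₁ * x ^ 3 : ℕ) : ℤ_[3])
        = (((u₂ * y ^ 3 + u₃ + u₁ * x ^ 3 : ℕ) : ℤ) : ℤ_[3]) by push_cast; ring]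
    exact PadicInt.norm_int_le_pow_iff_dvd.mpr (by exact_mod_cast hdvd)
  have hderiv : F.derivative.eval a = 3 * ((u₂:ℕ) : ℤ_[3]) * a ^ 2 := by
    simp only [hF, Polynomial.derivative_add, Polynomial.derivative_C,
      Polynomial.derivative_C_mul, Polynomial.derivative_X_pow, Polynomial.eval_add,
      Polynomial.eval_mul, Polynomial.eval_C, Polynomial.eval_pow, Polynomial.eval_X,
      Polynomial.eval_zero, Polynomial.eval_natCast, add_zero]
    push_cast; ring
  have unitnorm : ∀ n : ℕ, n % 3 ≠ 0 → ‖((n:ℕ) : ℤ_[3])‖ = 1 := by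
    intro n hn
    refine le_antisymm (PadicInt.norm_le_one _) ?_
    by_contra hlt
    push_neg at hlt
    rw [show ((n:ℕ):ℤ_[3]) = (((n:ℕ):ℤ):ℤ_[3]) by push_cast; ring] at hlt
    have h' := (PadicInt.norm_int_lt_one_iff_dvd _).mp hlt
    have : (3:ℕ) ∣ n := by exact_mod_cast h'
    omega
  have h3n : ‖(3:ℤ_[3])‖ = ((3:ℕ):ℝ)⁻¹ := by
    have := PadicInt.norm_p (p := 3)
    simpa using this
  have hnorm : ‖F.eval a‖ < ‖F.derivative.eval a‖ ^ 2 := by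
    rw [hderiv]
    simp only [norm_mul, norm_pow, h3n, unitnorm u₂ h3u2, ha, unitnorm y hy]
    refine lt_of_le_of_lt hnormeval ?_
    norm_num
  obtain ⟨z, hz, -, -, -⟩ := hensels_lemma hnorm
  have hz' : ((u₂:ℕ) : ℤ_[3]) * z ^ 3 + A = 0 := by
    simpa only [Polynomial.coe_aeval_eq_eval, hF, Polynomial.eval_add, Polynomial.eval_mul, Polynomial.eval_C,
      Polynomial.eval_pow, Polynomial.eval_X] using hz
  refine ⟨((x:ℕ) : ℚ_[3]), (z : ℚ_[3]), 1, by simp, ?_⟩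
  have hfin := congrArg (fun t : ℤ_[3] => (t : ℚ_[3])) hz'
  simp only [hA] at hfin
  push_cast at hfin
  linear_combination hfin
end

section
/- Let (u_1, u_2, u_3) be pairwise coprime cubefree positive integers with 3 ∤ u_1 u_2 u_3. Then u_1 X³ + u_2 Y³ + u_3 Z³ = 0 has a nontrivial solution over Q_3 if and only if u_i/u_j ≡ ±1 mod 9 for some pair i ≠ j. -/
set_option maxHeartbeats 1000000

private lemma zmod9_cube : ∀ w : ZMod 9, w^3 = 0 ∨ w^3 = 1 ∨ w^3 = -1 := by decide
private lemma zmod9_key : ∀ a b c s t : ZMod 9,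
    (a ≠ 0 ∧ a ≠ 3 ∧ a ≠ 6) → (b ≠ 0 ∧ b ≠ 3 ∧ b ≠ 6) → (c ≠ 0 ∧ c ≠ 3 ∧ c ≠ 6) →
    (s = 0 ∨ s = 1 ∨ s = -1) → (t = 0 ∨ t = 1 ∨ t = -1) →
    a + b * s + c * t = 0 →
    (a = b ∨ a = -b ∨ a = c ∨ a = -c ∨ b = c ∨ b = -c) := by decide
private lemma zmod27_six : ∀ v : ZMod 27,
    ((ZMod.cast v : ZMod 9) = 1 ∨ (ZMod.cast v : ZMod 9) = -1) →
    (v = 1 ∨ v = 10 ∨ v = 19 ∨ v = -1 ∨ v = -10 ∨ v = -19) := by decide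
private lemma zmod9_helper : ∀ a b : ZMod 9, (a ≠ 0 ∧ a ≠ 3 ∧ a ≠ 6) →
    (b = a ∨ b = -a) → (-b*a^2 = 1 ∨ -b*a^2 = -1) := by decide
private lemma u9_of (u : ℕ) (hu : ¬ 3 ∣ u) : ((u:ZMod 9) ≠ 0 ∧ (u:ZMod 9) ≠ 3 ∧ (u:ZMod 9) ≠ 6) := by
  have h3 : (u : ZMod 3) ≠ 0 := by
    simpa [ZMod.natCast_eq_zero_iff] using hu
  have hmap : ZMod.castHom (by norm_num : (3:ℕ) ∣ 9) (ZMod 3) (u : ZMod 9) = (u : ZMod 3) := by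
    simp
  have key : ∀ a : ZMod 9, (a = 0 ∨ a = 3 ∨ a = 6) → ZMod.castHom (by norm_num : (3:ℕ) ∣ 9) (ZMod 3) a = 0 := by decide
  refine ⟨?_, ?_, ?_⟩ <;> intro h <;> exact h3 (hmap ▸ key _ (by simp [h]))


private lemma cube_exists (t : ℤ_[3])
    (ht : PadicInt.toZModPow 2 t = 1 ∨ PadicInt.toZModPow 2 t = -1) :
    ∃ r : ℤ_[3], r ^ 3 = t := by
  have hcast : (ZMod.cast (PadicInt.toZModPow 3 t) : ZMod 9) = PadicInt.toZModPow 2 t :=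
    PadicInt.cast_toZModPow 2 3 (by norm_num) t
  have hsix := zmod27_six (PadicInt.toZModPow 3 t) (by rw [hcast]; exact ht)
  have hA : ∃ A : ℤ, ¬ (3:ℤ) ∣ A ∧ ((A : ZMod 27))^3 = PadicInt.toZModPow 3 t := by
    rcases hsix with h | h | h | h | h | h
    · exact ⟨1, by norm_num, by rw [h]; decide⟩
    · exact ⟨4, by norm_num, by rw [h]; decide⟩
    · exact ⟨7, by norm_num, by rw [h]; decide⟩
    · exact ⟨-1, by norm_num, by rw [h]; decide⟩
    · exact ⟨-4, by norm_num, by rw [h]; decide⟩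
    · exact ⟨-7, by norm_num, by rw [h]; decide⟩
  obtain ⟨A, hA3, hA27⟩ := hA
  have hnormA : ‖(A : ℤ_[3])‖ = 1 := by
    refine le_antisymm (PadicInt.norm_le_one _) (not_lt.mp fun hlt => hA3 ?_)
    exact (PadicInt.norm_int_lt_one_iff_dvd A).mp hlt
  set F : Polynomial ℤ_[3] := Polynomial.X ^ 3 - Polynomial.C t with hF
  have hevalA : F.eval (A : ℤ_[3]) = (A : ℤ_[3]) ^ 3 - t := by simp [hF]
  have hderiv : F.derivative.eval (A : ℤ_[3]) = 3 * (A : ℤ_[3]) ^ 2 := by simp [hF]; norm_num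
  have h1 : ‖(A : ℤ_[3]) ^ 3 - t‖ ≤ ((3:ℕ):ℝ) ^ (-(3:ℕ) : ℤ) := by
    rw [PadicInt.norm_le_pow_iff_mem_span_pow, ← PadicInt.ker_toZModPow, RingHom.mem_ker,
      map_sub, map_pow, map_intCast, sub_eq_zero]
    exact_mod_cast hA27
  have h2 : ‖F.derivative.eval (A : ℤ_[3])‖ = (3:ℝ)⁻¹ := by
    rw [hderiv, norm_mul, norm_pow, hnormA]
    have : ‖(3 : ℤ_[3])‖ = (3:ℝ)⁻¹ := by
      have := PadicInt.norm_p (p := 3)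
      simpa using this
    rw [this]; norm_num
  have hlt : ‖F.eval (A : ℤ_[3])‖ < ‖F.derivative.eval (A : ℤ_[3])‖ ^ 2 := by
    rw [hevalA, h2]
    refine lt_of_le_of_lt h1 ?_
    norm_num
  obtain ⟨z, hz, -⟩ := hensels_lemma hlt
  refine ⟨z, ?_⟩
  have : z ^ 3 - t = 0 := by simpa [hF] using hz
  exact sub_eq_zero.mp this


private lemma rev (a b : ℕ) (ha0 : 0 < a) (ha : ¬ 3 ∣ a)
    (h : (a:ℤ) ≡ (b:ℤ) [ZMOD 9] ∨ (a:ℤ) ≡ -(b:ℤ) [ZMOD 9]) :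
    ∃ X : ℚ_[3], (a : ℚ_[3]) * X ^ 3 + b = 0 := by
  have hz : (b : ZMod 9) = (a : ZMod 9) ∨ (b : ZMod 9) = -(a : ZMod 9) := by
    rcases h with h | h
    · left
      have := (ZMod.intCast_eq_intCast_iff _ _ _).mpr h
      push_cast at this; exact this.symm
    · right
      have := (ZMod.intCast_eq_intCast_iff _ _ _).mpr h
      push_cast at this
      rw [this]; ring
  have key : PadicInt.toZModPow 2 (-(b:ℤ_[3]) * (a:ℤ_[3])^2) = 1 ∨
      PadicInt.toZModPow 2 (-(b:ℤ_[3]) * (a:ℤ_[3])^2) = -1 := by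
    rw [map_mul, map_neg, map_pow, map_natCast, map_natCast]
    exact zmod9_helper _ _ (u9_of a ha) hz
  obtain ⟨r, hr⟩ := cube_exists _ key
  have haQ : (a : ℚ_[3]) ≠ 0 := Nat.cast_ne_zero.mpr ha0.ne'
  refine ⟨(r : ℚ_[3]) / a, ?_⟩
  have hrQ : (r : ℚ_[3]) ^ 3 = -(b:ℚ_[3]) * (a:ℚ_[3])^2 := by
    have := congrArg (fun x : ℤ_[3] => (x : ℚ_[3])) hr
    push_cast at this
    exact this
  field_simp
  linear_combination hrQ


private lemma fwd (a b c : ℕ) (ha : ¬ 3 ∣ a) (hb : ¬ 3 ∣ b) (hc : ¬ 3 ∣ c)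
    (y z : ℚ_[3]) (hy : ‖y‖ ≤ 1) (hz : ‖z‖ ≤ 1)
    (heq : (a:ℚ_[3]) + (b:ℚ_[3]) * y ^ 3 + (c:ℚ_[3]) * z ^ 3 = 0) :
    ((a:ZMod 9) = (b:ZMod 9) ∨ (a:ZMod 9) = -(b:ZMod 9) ∨
     (a:ZMod 9) = (c:ZMod 9) ∨ (a:ZMod 9) = -(c:ZMod 9) ∨
     (b:ZMod 9) = (c:ZMod 9) ∨ (b:ZMod 9) = -(c:ZMod 9)) := by
  set y' : ℤ_[3] := ⟨y, hy⟩ with hy'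
  set z' : ℤ_[3] := ⟨z, hz⟩ with hz'
  have hZ : (a:ℤ_[3]) + (b:ℤ_[3]) * y' ^ 3 + (c:ℤ_[3]) * z' ^ 3 = 0 := by
    apply Subtype.coe_injective
    push_cast
    exact heq
  have h9 : (a : ZMod 9) + (b : ZMod 9) * (PadicInt.toZModPow 2 y') ^ 3
      + (c : ZMod 9) * (PadicInt.toZModPow 2 z') ^ 3 = 0 := by
    have := congrArg (PadicInt.toZModPow 2) hZ
    simpa [map_add, map_mul, map_pow, map_natCast] using this
  exact zmod9_key _ _ _ _ _ (u9_of a ha) (u9_of b hb) (u9_of c hc)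
    (zmod9_cube _) (zmod9_cube _) h9


private lemma conv1 (a b : ℕ) (h : (a:ZMod 9) = (b:ZMod 9)) : (a:ℤ) ≡ (b:ℤ) [ZMOD 9] := by
  have : ((a:ℤ) : ZMod 9) = ((b:ℤ) : ZMod 9) := by push_cast; exact h
  exact_mod_cast (ZMod.intCast_eq_intCast_iff _ _ _).mp this
private lemma conv2 (a b : ℕ) (h : (a:ZMod 9) = -(b:ZMod 9)) : (a:ℤ) ≡ -(b:ℤ) [ZMOD 9] := by
  have : ((a:ℤ) : ZMod 9) = (((-(b:ℤ)) : ℤ) : ZMod 9) := by push_cast; exact h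
  exact_mod_cast (ZMod.intCast_eq_intCast_iff _ _ _).mp this
private lemma negswap (a b : ZMod 9) (h : a = -b) : b = -a := by rw [h, neg_neg]

private lemma max_case (X Y Z : ℚ_[3]) (h : ¬(X = 0 ∧ Y = 0 ∧ Z = 0)) :
    (X ≠ 0 ∧ ‖Y‖ ≤ ‖X‖ ∧ ‖Z‖ ≤ ‖X‖) ∨ (Y ≠ 0 ∧ ‖X‖ ≤ ‖Y‖ ∧ ‖Z‖ ≤ ‖Y‖) ∨
    (Z ≠ 0 ∧ ‖X‖ ≤ ‖Z‖ ∧ ‖Y‖ ≤ ‖Z‖) := by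
  set M := max ‖X‖ (max ‖Y‖ ‖Z‖) with hM
  have hXM : ‖X‖ ≤ M := le_max_left _ _
  have hYM : ‖Y‖ ≤ M := le_trans (le_max_left _ _) (le_max_right _ _)
  have hZM : ‖Z‖ ≤ M := le_trans (le_max_right _ _) (le_max_right _ _)
  have hpos : 0 < M := by
    by_contra hp
    push_neg at hp
    exact h ⟨norm_le_zero_iff.mp (hXM.trans hp), norm_le_zero_iff.mp (hYM.trans hp),
      norm_le_zero_iff.mp (hZM.trans hp)⟩
  rcases max_choice ‖X‖ (max ‖Y‖ ‖Z‖) with h1 | h1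
  · have hMX : M = ‖X‖ := hM.trans h1
    exact Or.inl ⟨norm_pos_iff.mp (hMX ▸ hpos), hMX ▸ hYM, hMX ▸ hZM⟩
  · rcases max_choice ‖Y‖ ‖Z‖ with h2 | h2
    · have hMY : M = ‖Y‖ := (hM.trans h1).trans h2
      exact Or.inr (Or.inl ⟨norm_pos_iff.mp (hMY ▸ hpos), hMY ▸ hXM, hMY ▸ hZM⟩)
    · have hMZ : M = ‖Z‖ := (hM.trans h1).trans h2
      exact Or.inr (Or.inr ⟨norm_pos_iff.mp (hMZ ▸ hpos), hMZ ▸ hXM, hMZ ▸ hYM⟩)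


/-- for pairwise coprime cubefree positive integers `u₁, u₂, u₃` all
coprime to `3`, the equation `u₁X³ + u₂Y³ + u₃Z³ = 0` has a nontrivial solution in
`ℚ₃` iff `u_i ≡ ±u_j mod 9` for some `i ≠ j`. -/
theorem local_solvable_at_three (u₁ u₂ u₃ : ℕ)
    (h₁ : 0 < u₁) (h₂ : 0 < u₂) (h₃ : 0 < u₃)
    (hcf₁ : ∀ p : ℕ, p.Prime → ¬ p ^ 3 ∣ u₁)
    (hcf₂ : ∀ p : ℕ, p.Prime → ¬ p ^ 3 ∣ u₂)
    (hcf₃ : ∀ p : ℕ, p.Prime → ¬ p ^ 3 ∣ u₃)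
    (hco₁₂ : Nat.Coprime u₁ u₂) (hco₁₃ : Nat.Coprime u₁ u₃) (hco₂₃ : Nat.Coprime u₂ u₃)
    (h3 : ¬ 3 ∣ u₁ * u₂ * u₃) :
    (∃ X Y Z : ℚ_[3], (X, Y, Z) ≠ (0, 0, 0) ∧
      (u₁ : ℚ_[3]) * X ^ 3 + (u₂ : ℚ_[3]) * Y ^ 3 + (u₃ : ℚ_[3]) * Z ^ 3 = 0) ↔
    ((u₁ : ℤ) ≡ (u₂ : ℤ) [ZMOD 9] ∨ (u₁ : ℤ) ≡ -(u₂ : ℤ) [ZMOD 9] ∨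
     (u₁ : ℤ) ≡ (u₃ : ℤ) [ZMOD 9] ∨ (u₁ : ℤ) ≡ -(u₃ : ℤ) [ZMOD 9] ∨
     (u₂ : ℤ) ≡ (u₃ : ℤ) [ZMOD 9] ∨ (u₂ : ℤ) ≡ -(u₃ : ℤ) [ZMOD 9]) := by
  have n1 : ¬ 3 ∣ u₁ := fun h => h3 (dvd_mul_of_dvd_left (dvd_mul_of_dvd_left h u₂) u₃)
  have n2 : ¬ 3 ∣ u₂ := fun h => h3 (dvd_mul_of_dvd_left (dvd_mul_of_dvd_right h u₁) u₃)
  have n3 : ¬ 3 ∣ u₃ := fun h => h3 (dvd_mul_of_dvd_right h (u₁ * u₂))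
  constructor
  · rintro ⟨X, Y, Z, hne, heq⟩
    have hnz : ¬ (X = 0 ∧ Y = 0 ∧ Z = 0) := by
      rintro ⟨hX, hY, hZ⟩; exact hne (by simp [hX, hY, hZ])
    rcases max_case X Y Z hnz with ⟨h0, hA, hB⟩ | ⟨h0, hA, hB⟩ | ⟨h0, hA, hB⟩
    · -- X maximal
      have hy : ‖Y / X‖ ≤ 1 := by
        rw [norm_div]; exact div_le_one_of_le₀ hA (norm_nonneg _)
      have hz : ‖Z / X‖ ≤ 1 := by
        rw [norm_div]; exact div_le_one_of_le₀ hB (norm_nonneg _)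
      have heq' : (u₁:ℚ_[3]) + (u₂:ℚ_[3]) * (Y/X) ^ 3 + (u₃:ℚ_[3]) * (Z/X) ^ 3 = 0 := by
        field_simp
        linear_combination heq
      rcases fwd u₁ u₂ u₃ n1 n2 n3 _ _ hy hz heq' with h | h | h | h | h | h
      · exact Or.inl (conv1 _ _ h)
      · exact Or.inr (Or.inl (conv2 _ _ h))
      · exact Or.inr (Or.inr (Or.inl (conv1 _ _ h)))
      · exact Or.inr (Or.inr (Or.inr (Or.inl (conv2 _ _ h))))
      · exact Or.inr (Or.inr (Or.inr (Or.inr (Or.inl (conv1 _ _ h)))))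
      · exact Or.inr (Or.inr (Or.inr (Or.inr (Or.inr (conv2 _ _ h)))))
    · -- Y maximal
      have hy : ‖X / Y‖ ≤ 1 := by
        rw [norm_div]; exact div_le_one_of_le₀ hA (norm_nonneg _)
      have hz : ‖Z / Y‖ ≤ 1 := by
        rw [norm_div]; exact div_le_one_of_le₀ hB (norm_nonneg _)
      have heq' : (u₂:ℚ_[3]) + (u₁:ℚ_[3]) * (X/Y) ^ 3 + (u₃:ℚ_[3]) * (Z/Y) ^ 3 = 0 := by
        field_simp
        linear_combination heq
      rcases fwd u₂ u₁ u₃ n2 n1 n3 _ _ hy hz heq' with h | h | h | h | h | h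
      · exact Or.inl (conv1 _ _ h.symm)
      · exact Or.inr (Or.inl (conv2 _ _ (negswap _ _ h)))
      · exact Or.inr (Or.inr (Or.inr (Or.inr (Or.inl (conv1 _ _ h)))))
      · exact Or.inr (Or.inr (Or.inr (Or.inr (Or.inr (conv2 _ _ h)))))
      · exact Or.inr (Or.inr (Or.inl (conv1 _ _ h)))
      · exact Or.inr (Or.inr (Or.inr (Or.inl (conv2 _ _ h))))
    · -- Z maximal
      have hy : ‖X / Z‖ ≤ 1 := by
        rw [norm_div]; exact div_le_one_of_le₀ hA (norm_nonneg _)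
      have hz : ‖Y / Z‖ ≤ 1 := by
        rw [norm_div]; exact div_le_one_of_le₀ hB (norm_nonneg _)
      have heq' : (u₃:ℚ_[3]) + (u₁:ℚ_[3]) * (X/Z) ^ 3 + (u₂:ℚ_[3]) * (Y/Z) ^ 3 = 0 := by
        field_simp
        linear_combination heq
      rcases fwd u₃ u₁ u₂ n3 n1 n2 _ _ hy hz heq' with h | h | h | h | h | h
      · exact Or.inr (Or.inr (Or.inl (conv1 _ _ h.symm)))
      · exact Or.inr (Or.inr (Or.inr (Or.inl (conv2 _ _ (negswap _ _ h)))))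
      · exact Or.inr (Or.inr (Or.inr (Or.inr (Or.inl (conv1 _ _ h.symm)))))
      · exact Or.inr (Or.inr (Or.inr (Or.inr (Or.inr (conv2 _ _ (negswap _ _ h))))))
      · exact Or.inl (conv1 _ _ h)
      · exact Or.inr (Or.inl (conv2 _ _ h))
  · intro h
    rcases h with h | h | h | h | h | h
    · obtain ⟨Xs, hXs⟩ := rev u₁ u₂ h₁ n1 (Or.inl h)
      exact ⟨Xs, 1, 0, by simp, by simpa using hXs⟩
    · obtain ⟨Xs, hXs⟩ := rev u₁ u₂ h₁ n1 (Or.inr h)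
      exact ⟨Xs, 1, 0, by simp, by simpa using hXs⟩
    · obtain ⟨Xs, hXs⟩ := rev u₁ u₃ h₁ n1 (Or.inl h)
      exact ⟨Xs, 0, 1, by simp, by simpa using hXs⟩
    · obtain ⟨Xs, hXs⟩ := rev u₁ u₃ h₁ n1 (Or.inr h)
      exact ⟨Xs, 0, 1, by simp, by simpa using hXs⟩
    · obtain ⟨Xs, hXs⟩ := rev u₂ u₃ h₂ n2 (Or.inl h)
      refine ⟨0, Xs, 1, by simp, by simpa using hXs⟩
    · obtain ⟨Xs, hXs⟩ := rev u₂ u₃ h₂ n2 (Or.inr h)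
      refine ⟨0, Xs, 1, by simp, by simpa using hXs⟩
end

section
/- Let Ω(N) = e·3^k(log log N + B) for constants k ≥ 1 and B > 0. Then the sum over positive integers n ≤ N with ω(n) ≥ Ω(N) of 3^{k ω(n)} is O_k(N / log N), where ω(n) denotes the number of distinct prime factors of n. -/
open Real Finset

namespace SLOB


lemma pf_eq {N n : ℕ} (h1 : 1 ≤ n) (h2 : n ≤ N) :
    n.primeFactors = (Nat.primesBelow (N+1)).filter (· ∣ n) := by
  ext p
  simp only [Nat.mem_primeFactors, mem_filter, Nat.mem_primesBelow, Nat.lt_succ_iff]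
  constructor
  · rintro ⟨hp, hdvd, -⟩
    exact ⟨⟨(Nat.le_of_dvd h1 hdvd).trans h2, hp⟩, hdvd⟩
  · rintro ⟨⟨-, hp⟩, hdvd⟩
    exact ⟨hp, hdvd, by omega⟩

lemma theta_bound (N : ℕ) : ∑ p ∈ Nat.primesBelow (N+1), Real.log p ≤ N * Real.log 4 := by
  have hpos : ∀ p ∈ Nat.primesBelow (N+1), (0:ℝ) < p := fun p hp => by
    exact_mod_cast (Nat.prime_of_mem_primesBelow hp).pos
  rw [← Real.log_prod (fun p hp => (hpos p hp).ne')]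
  have h1 : (∏ p ∈ Nat.primesBelow (N+1), (p:ℝ)) = ((primorial N : ℕ) : ℝ) := by
    rw [primorial]; push_cast; rfl
  rw [h1]
  have hp1 : (0:ℝ) < (primorial N : ℝ) := by exact_mod_cast primorial_pos N
  have hp2 : ((primorial N : ℕ) : ℝ) ≤ (((4:ℕ)^N : ℕ) : ℝ) := by
    exact_mod_cast primorial_le_4_pow N
  calc Real.log (primorial N) ≤ Real.log (((4:ℕ)^N : ℕ) : ℝ) := Real.log_le_log hp1 hp2
    _ = N * Real.log 4 := by push_cast; rw [Real.log_pow]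

noncomputable def f (n : ℕ) : ℝ := if n.Prime then Real.log n / n else 0

noncomputable def A (n : ℕ) : ℝ := ∑ m ∈ Icc 2 n, f m

lemma filter_prime_Icc (N : ℕ) : (Icc 2 N).filter Nat.Prime = Nat.primesBelow (N+1) := by
  ext p
  simp only [mem_filter, mem_Icc, Nat.mem_primesBelow, Nat.lt_succ_iff]
  constructor
  · rintro ⟨⟨-, h⟩, hp⟩; exact ⟨h, hp⟩
  · rintro ⟨h, hp⟩; exact ⟨⟨hp.two_le, h⟩, hp⟩

lemma A_eq (N : ℕ) : A N = ∑ p ∈ Nat.primesBelow (N+1), Real.log p / p := by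
  rw [A, ← Finset.sum_filter_add_sum_filter_not (Icc 2 N) Nat.Prime f]
  have h2 : ∑ m ∈ (Icc 2 N).filter (fun m => ¬ m.Prime), f m = 0 :=
    Finset.sum_eq_zero fun m hm => by
      simp only [mem_filter] at hm; simp [f, hm.2]
  rw [h2, add_zero, ← filter_prime_Icc N]
  exact Finset.sum_congr rfl fun p hp => by
    simp only [mem_filter] at hp; simp [f, hp.2]

lemma mertens1 (N : ℕ) (hN : 1 ≤ N) : A N ≤ Real.log N + Real.log 4 := by
  have step1 : ∀ n ∈ Icc 1 N, ∑ p ∈ n.primeFactors, Real.log p ≤ Real.log n := by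
    intro n hn
    simp only [mem_Icc] at hn
    have hd : (∏ p ∈ n.primeFactors, p) ∣ n := Nat.prod_primeFactors_dvd n
    have hne : ∀ p ∈ n.primeFactors, ((p:ℝ)) ≠ 0 := fun p hp => by
      exact_mod_cast (Nat.prime_of_mem_primeFactors hp).pos.ne'
    rw [← Real.log_prod hne,
      show (∏ p ∈ n.primeFactors, (p:ℝ)) = ((∏ p ∈ n.primeFactors, p : ℕ) : ℝ) by push_cast; rfl]
    have hprodpos : 0 < ∏ p ∈ n.primeFactors, p :=
      Nat.pos_of_ne_zero fun h => by
        have := Nat.eq_zero_of_zero_dvd (h ▸ hd); omega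
    exact Real.log_le_log (by exact_mod_cast hprodpos)
      (by exact_mod_cast Nat.le_of_dvd (by omega) hd)
  have swap : ∑ n ∈ Icc 1 N, ∑ p ∈ n.primeFactors, Real.log p
      = ∑ p ∈ Nat.primesBelow (N+1), (N / p : ℕ) * Real.log p := by
    have h1 : ∀ n ∈ Icc 1 N, ∑ p ∈ n.primeFactors, Real.log p
        = ∑ p ∈ Nat.primesBelow (N+1), if p ∣ n then Real.log p else 0 := by
      intro n hn
      simp only [mem_Icc] at hn
      rw [pf_eq hn.1 hn.2, Finset.sum_filter]
    rw [Finset.sum_congr rfl h1, Finset.sum_comm]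
    refine Finset.sum_congr rfl fun p hp => ?_
    rw [← Finset.sum_filter, Finset.sum_const, nsmul_eq_mul]
    congr 2
    rw [show Icc 1 N = Ioc 0 N from rfl]
    exact Nat.Ioc_filter_dvd_card_eq_div N p
  have lower : ∀ p ∈ Nat.primesBelow (N+1),
      ((N:ℝ)/p - 1) * Real.log p ≤ ((N / p : ℕ) : ℝ) * Real.log p := by
    intro p hp
    have hp2 := Nat.prime_of_mem_primesBelow hp
    have hppos : (0:ℝ) < p := by exact_mod_cast hp2.pos
    apply mul_le_mul_of_nonneg_right _ (Real.log_natCast_nonneg p)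
    have hdm := Nat.div_add_mod N p
    have hmlt : N % p < p := Nat.mod_lt _ hp2.pos
    have : N < p * (N / p) + p := by omega
    have hcast : (N:ℝ) < p * ((N/p : ℕ) : ℝ) + p := by exact_mod_cast this
    rw [sub_le_iff_le_add, div_le_iff₀ hppos]
    nlinarith
  have upper : ∑ n ∈ Icc 1 N, Real.log n ≤ N * Real.log N := by
    calc ∑ n ∈ Icc 1 N, Real.log n ≤ ∑ _n ∈ Icc 1 N, Real.log N :=
          Finset.sum_le_sum fun n hn => by
            simp only [mem_Icc] at hn
            exact Real.log_le_log (by exact_mod_cast hn.1) (by exact_mod_cast hn.2)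
      _ = N * Real.log N := by
          rw [Finset.sum_const, Nat.card_Icc]; simp [nsmul_eq_mul]
  have chain : ∑ p ∈ Nat.primesBelow (N+1), ((N:ℝ)/p - 1) * Real.log p ≤ N * Real.log N :=
    le_trans (Finset.sum_le_sum lower)
      (le_trans (le_of_eq swap.symm) (le_trans (Finset.sum_le_sum step1) upper))
  have expand : ∑ p ∈ Nat.primesBelow (N+1), ((N:ℝ)/p - 1) * Real.log p
      = N * (∑ p ∈ Nat.primesBelow (N+1), Real.log p / p)
        - ∑ p ∈ Nat.primesBelow (N+1), Real.log p := by
    rw [Finset.mul_sum, ← Finset.sum_sub_distrib]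
    refine Finset.sum_congr rfl fun p hp => ?_
    have hppos : (0:ℝ) < p := by exact_mod_cast (Nat.prime_of_mem_primesBelow hp).pos
    field_simp
  have hθ := theta_bound N
  have hNpos : (0:ℝ) < N := by exact_mod_cast hN
  rw [A_eq]
  have key : (N:ℝ) * (∑ p ∈ Nat.primesBelow (N+1), Real.log p / p)
      ≤ N * (Real.log N + Real.log 4) := by
    rw [expand] at chain; rw [mul_add]; linarith
  exact le_of_mul_le_mul_left key hNpos







lemma A_succ (n : ℕ) (h : 1 ≤ n) : A (n+1) = A n + f (n+1) := by
  rw [A, A, Finset.sum_Icc_succ_top (by omega)]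

/-- Abel summation identity. -/
lemma abel (M : ℕ) : ∑ n ∈ Icc 2 (M+2), f n / Real.log n
    = A (M+2) / Real.log ((M+2 : ℕ))
      + ∑ n ∈ Icc 2 (M+1), A n * (1 / Real.log n - 1 / Real.log ((n+1 : ℕ))) := by
  induction M with
  | zero =>
    simp [A, Finset.Icc_self, Finset.sum_singleton]
  | succ M ih =>
    simp only [show M+1+2 = M+3 from rfl, show M+1+1 = M+2 from rfl]
    have e1 : ∑ n ∈ Icc 2 (M+3), f n / Real.log n
        = (∑ n ∈ Icc 2 (M+2), f n / Real.log n) + f (M+3) / Real.log ((M+3 : ℕ)) := by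
      rw [show M+3 = (M+2)+1 from rfl, Finset.sum_Icc_succ_top (by omega)]
    have e2 : ∑ n ∈ Icc 2 (M+2), A n * (1 / Real.log n - 1 / Real.log ((n+1 : ℕ)))
        = (∑ n ∈ Icc 2 (M+1), A n * (1 / Real.log n - 1 / Real.log ((n+1 : ℕ))))
          + A (M+2) * (1 / Real.log ((M+2 : ℕ)) - 1 / Real.log ((M+3 : ℕ))) := by
      rw [show M+2 = (M+1)+1 from rfl, Finset.sum_Icc_succ_top (by omega)]
    have e3 : A (M+3) = A (M+2) + f (M+3) := A_succ (M+2) (by omega)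
    rw [e1, ih, e2, e3]
    ring

lemma logdiff {a b : ℝ} (hb : 0 < b) (hab : b ≤ a) :
    (a - b) / a ≤ Real.log a - Real.log b := by
  have ha : 0 < a := hb.trans_le hab
  have h := Real.log_le_sub_one_of_pos (show 0 < b/a from div_pos hb ha)
  rw [Real.log_div hb.ne' ha.ne'] at h
  have : (a - b)/a = 1 - b/a := by field_simp
  linarith

lemma logdiff' {a b : ℝ} (hb : 0 < b) (hab : b ≤ a) :
    Real.log a - Real.log b ≤ (a - b) / b := by
  have ha : 0 < a := hb.trans_le hab
  have h := Real.log_le_sub_one_of_pos (show 0 < a/b from div_pos ha hb)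
  rw [Real.log_div ha.ne' hb.ne'] at h
  have : (a - b)/b = a/b - 1 := by field_simp
  linarith

/-- telescoping comparison. -/
lemma tele (m : ℕ) (h : 2 ≤ m) :
    1 / ((m+1 : ℝ) * Real.log (m+1))
      ≤ Real.log (Real.log (m+1)) - Real.log (Real.log m) := by
  have h2 : (2:ℝ) ≤ (m:ℝ) := by exact_mod_cast h
  have hlm : 0 < Real.log m := Real.log_pos (by linarith)
  have hmono : Real.log m ≤ Real.log (m+1) := Real.log_le_log (by linarith) (by linarith)
  have hlm1 : 0 < Real.log (m+1) := lt_of_lt_of_le hlm hmono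
  have step1 : (Real.log (m+1) - Real.log m) / Real.log (m+1)
      ≤ Real.log (Real.log (m+1)) - Real.log (Real.log m) := logdiff hlm hmono
  have step2 : 1/(m+1:ℝ) ≤ Real.log (m+1) - Real.log m := by
    have := logdiff (show (0:ℝ) < m by linarith) (show (m:ℝ) ≤ m+1 by linarith)
    have e : ((m:ℝ)+1 - m)/(m+1) = 1/(m+1) := by ring_nf
    rw [e] at this; exact this
  calc 1 / ((m+1:ℝ) * Real.log (m+1)) = (1/(m+1:ℝ)) / Real.log (m+1) :=
        (div_div 1 ((m:ℝ)+1) (Real.log ((m:ℝ)+1))).symm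
    _ ≤ (Real.log (m+1) - Real.log m) / Real.log (m+1) :=
        by gcongr
    _ ≤ _ := step1

lemma tsum (F : ℕ → ℝ) (M : ℕ) :
    ∑ n ∈ Icc 2 (M+1), (F n - F (n+1)) = F 2 - F (M+2) := by
  induction M with
  | zero => simp
  | succ M ih =>
    rw [show M+1+1 = (M+1)+1 from rfl, Finset.sum_Icc_succ_top (by omega), ih]
    ring_nf

noncomputable def Mconst : ℝ := 2 + 2 * Real.log 4 / Real.log 2 - Real.log (Real.log 2)

lemma t1bound (M : ℕ) :
    ∑ n ∈ Icc 2 (M+1), (1 - Real.log n / Real.log ((n+1 : ℕ)))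
      ≤ 1 + (Real.log (Real.log ((M+2 : ℕ))) - Real.log (Real.log ((2:ℕ)))) := by
  have hG : ∀ a b : ℕ, 2 ≤ a → a ≤ b →
      Real.log (Real.log a) ≤ Real.log (Real.log b) := by
    intro a b ha hab
    have h2 : (2:ℝ) ≤ (a:ℝ) := by exact_mod_cast ha
    have hla : 0 < Real.log a := Real.log_pos (by linarith)
    exact Real.log_le_log hla (Real.log_le_log (by linarith) (by exact_mod_cast hab))
  match M with
  | 0 =>
    have := hG 2 2 le_rfl le_rfl
    simp only [Nat.zero_add, show (0:ℕ)+1 = 1 from rfl]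
    rw [show Icc 2 1 = (∅ : Finset ℕ) from rfl]
    simp
  | Nat.succ K =>
    have hsplit : Icc 2 (K+1+1) = insert 2 (Icc 3 (K+2)) := by
      ext x; simp only [mem_insert, mem_Icc]; omega
    rw [hsplit, Finset.sum_insert (by simp [mem_Icc])]
    have himg : Icc 3 (K+2) = Finset.image (· + 1) (Icc 2 (K+1)) := by
      rw [Finset.image_add_right_Icc]
    rw [himg, Finset.sum_image (fun a _ b _ h => by omega)]
    have hterm : ∀ m ∈ Icc 2 (K+1),
        1 - Real.log ((m+1:ℕ)) / Real.log ((m+1+1 : ℕ))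
          ≤ Real.log (Real.log ((m+1 : ℕ))) - Real.log (Real.log m) := by
      intro m hm
      simp only [mem_Icc] at hm
      have h2 : (2:ℝ) ≤ (m:ℝ) := by exact_mod_cast hm.1
      push_cast
      have hl1 : 0 < Real.log ((m:ℝ)+1) := Real.log_pos (by linarith)
      have hl2 : 0 < Real.log ((m:ℝ)+1+1) := Real.log_pos (by linarith)
      have hmono : Real.log ((m:ℝ)+1) ≤ Real.log ((m:ℝ)+1+1) :=
        Real.log_le_log (by linarith) (by linarith)
      have hstep : Real.log ((m:ℝ)+1+1) - Real.log ((m:ℝ)+1) ≤ 1/((m:ℝ)+1) := by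
        have := logdiff' (show (0:ℝ) < (m:ℝ)+1 by linarith)
          (show ((m:ℝ)+1) ≤ (m:ℝ)+1+1 by linarith)
        have e : (((m:ℝ)+1+1) - ((m:ℝ)+1))/((m:ℝ)+1) = 1/((m:ℝ)+1) := by ring
        rw [e] at this; exact this
      have htele := tele m hm.1
      calc 1 - Real.log ((m:ℝ)+1) / Real.log ((m:ℝ)+1+1)
          = (Real.log ((m:ℝ)+1+1) - Real.log ((m:ℝ)+1)) / Real.log ((m:ℝ)+1+1) := by
            rw [sub_div, div_self hl2.ne']
        _ ≤ (1/((m:ℝ)+1)) / Real.log ((m:ℝ)+1+1) := by gcongr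
        _ ≤ (1/((m:ℝ)+1)) / Real.log ((m:ℝ)+1) :=
            div_le_div_of_nonneg_left (by positivity) hl1 hmono
        _ = 1 / (((m:ℝ)+1) * Real.log ((m:ℝ)+1)) := div_div 1 _ _
        _ ≤ _ := htele
    have hsum : ∑ m ∈ Icc 2 (K+1), (1 - Real.log ((m+1:ℕ)) / Real.log ((m+1+1 : ℕ)))
        ≤ Real.log (Real.log ((K+2:ℕ))) - Real.log (Real.log ((2:ℕ))) := by
      refine (Finset.sum_le_sum hterm).trans (le_of_eq ?_)
      have htsum := tsum (fun n : ℕ => Real.log (Real.log n)) K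
      have e : ∑ m ∈ Icc 2 (K+1),
          (Real.log (Real.log ((m+1 : ℕ))) - Real.log (Real.log m))
          = - ∑ n ∈ Icc 2 (K+1),
              (Real.log (Real.log (n:ℕ)) - Real.log (Real.log ((n+1:ℕ)))) := by
        rw [← Finset.sum_neg_distrib]
        exact Finset.sum_congr rfl fun m _ => by ring
      rw [e, htsum]
      ring
    have h2term : 1 - Real.log ((2:ℕ)) / Real.log ((2+1:ℕ)) ≤ 1 := by
      have : (0:ℝ) ≤ Real.log ((2:ℕ)) / Real.log ((2+1:ℕ)) :=
        div_nonneg (Real.log_natCast_nonneg 2) (Real.log_natCast_nonneg 3)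
      linarith
    have hmono2 := hG (K+2) (K+1+2) (by omega) (by omega)
    linarith

lemma filter_prime_Icc' (N : ℕ) : (Icc 2 N).filter Nat.Prime = Nat.primesBelow (N+1) := by
  ext p
  simp only [mem_filter, mem_Icc, Nat.mem_primesBelow, Nat.lt_succ_iff]
  constructor
  · rintro ⟨⟨-, h⟩, hp⟩; exact ⟨h, hp⟩
  · rintro ⟨h, hp⟩; exact ⟨⟨hp.two_le, h⟩, hp⟩

lemma mertens2 (N : ℕ) (hN : 2 ≤ N) :
    ∑ p ∈ Nat.primesBelow (N+1), (1:ℝ)/p ≤ Real.log (Real.log N) + Mconst := by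
  obtain ⟨M, rfl⟩ : ∃ M, N = M+2 := ⟨N-2, by omega⟩
  have hlog2 : (0:ℝ) < Real.log 2 := Real.log_pos (by norm_num)
  have hlog4 : (0:ℝ) ≤ Real.log 4 := Real.log_nonneg (by norm_num)
  have hlogN : (0:ℝ) < Real.log ((M+2:ℕ)) := by
    apply Real.log_pos; push_cast; linarith [Nat.cast_nonneg (α := ℝ) M]
  have hlog2le : Real.log 2 ≤ Real.log ((M+2:ℕ)) := by
    apply Real.log_le_log (by norm_num); push_cast; linarith [Nat.cast_nonneg (α := ℝ) M]
  -- identify the prime sum with the weighted sum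
  have id1 : ∑ p ∈ Nat.primesBelow (M+2+1), (1:ℝ)/p
      = ∑ n ∈ Icc 2 (M+2), f n / Real.log n := by
    rw [← filter_prime_Icc' (M+2), Finset.sum_filter]
    refine Finset.sum_congr rfl fun n hn => ?_
    simp only [mem_Icc] at hn
    have hln : (0:ℝ) < Real.log n := by
      apply Real.log_pos; exact_mod_cast Nat.lt_of_lt_of_le one_lt_two hn.1
    have hn0 : ((n:ℝ)) ≠ 0 := by
      have : 0 < n := by omega
      exact_mod_cast this.ne'
    by_cases hp : n.Prime
    · simp only [hp, if_true, f]
      field_simp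
    · simp [f, hp]
  rw [id1, abel M]
  -- head bound
  have hA := mertens1 (M+2) (by omega)
  have head : A (M+2) / Real.log ((M+2:ℕ)) ≤ 1 + Real.log 4 / Real.log 2 := by
    calc A (M+2) / Real.log ((M+2:ℕ))
        ≤ (Real.log ((M+2:ℕ)) + Real.log 4) / Real.log ((M+2:ℕ)) := by gcongr
      _ = 1 + Real.log 4 / Real.log ((M+2:ℕ)) := by rw [add_div, div_self hlogN.ne']
      _ ≤ 1 + Real.log 4 / Real.log 2 := by gcongr
  -- tail bound
  have tail : ∑ n ∈ Icc 2 (M+1), A n * (1 / Real.log n - 1 / Real.log ((n+1 : ℕ)))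
      ≤ (1 + (Real.log (Real.log ((M+2:ℕ))) - Real.log (Real.log ((2:ℕ)))))
        + Real.log 4 / Real.log 2 := by
    have step : ∀ n ∈ Icc 2 (M+1), A n * (1 / Real.log n - 1 / Real.log ((n+1 : ℕ)))
        ≤ (1 - Real.log n / Real.log ((n+1:ℕ)))
          + (Real.log 4 / Real.log n - Real.log 4 / Real.log ((n+1:ℕ))) := by
      intro n hn
      simp only [mem_Icc] at hn
      have h2 : (2:ℝ) ≤ (n:ℝ) := by exact_mod_cast hn.1
      have hln : (0:ℝ) < Real.log n := Real.log_pos (by linarith)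
      have hln1 : (0:ℝ) < Real.log ((n+1:ℕ)) := by
        apply Real.log_pos; push_cast; linarith
      have hmono : Real.log (n:ℕ) ≤ Real.log ((n+1:ℕ)) := by
        apply Real.log_le_log (by linarith); push_cast; linarith
      have hd : 0 ≤ 1 / Real.log (n:ℕ) - 1 / Real.log ((n+1:ℕ)) := by
        rw [sub_nonneg]
        exact div_le_div_of_nonneg_left (by norm_num) hln hmono
      have hAn := mertens1 n (by omega)
      calc A n * (1 / Real.log n - 1 / Real.log ((n+1 : ℕ)))
          ≤ (Real.log n + Real.log 4) * (1 / Real.log n - 1 / Real.log ((n+1 : ℕ))) :=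
            mul_le_mul_of_nonneg_right hAn hd
        _ = (1 - Real.log n / Real.log ((n+1:ℕ)))
            + (Real.log 4 / Real.log n - Real.log 4 / Real.log ((n+1:ℕ))) := by
            field_simp
    refine (Finset.sum_le_sum step).trans ?_
    rw [Finset.sum_add_distrib]
    have p1 := t1bound M
    have p2 : ∑ n ∈ Icc 2 (M+1),
        (Real.log 4 / Real.log (n:ℕ) - Real.log 4 / Real.log ((n+1:ℕ)))
        ≤ Real.log 4 / Real.log 2 := by
      rw [tsum (fun n : ℕ => Real.log 4 / Real.log n) M]
      have : (0:ℝ) ≤ Real.log 4 / Real.log ((M+2:ℕ)) := div_nonneg hlog4 hlogN.le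
      have h22 : Real.log ((2:ℕ)) = Real.log 2 := by norm_num
      rw [h22]
      linarith
    linarith
  have h22 : Real.log ((2:ℕ):ℝ) = Real.log 2 := by norm_num
  rw [Mconst]
  rw [h22] at tail
  push_cast at tail head ⊢
  have hr : 2 * Real.log 4 / Real.log 2 = 2 * (Real.log 4 / Real.log 2) := by ring
  linarith

lemma sum_pow_omega (y : ℝ) (hy : 1 ≤ y) (N : ℕ) (hN : 1 ≤ N) :
    ∑ n ∈ Icc 1 N, y ^ n.primeFactors.card
      ≤ N * ∏ p ∈ Nat.primesBelow (N+1), (1 + (y-1)/p) := by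
  have hy0 : (0:ℝ) ≤ y - 1 := by linarith
  set P := Nat.primesBelow (N+1) with hP
  have hexpand : ∀ n ∈ Icc 1 N, y ^ n.primeFactors.card
      = ∑ S ∈ P.powerset, if S ⊆ n.primeFactors then (y-1)^S.card else 0 := by
    intro n hn
    simp only [mem_Icc] at hn
    have hsub : n.primeFactors ⊆ P := by
      rw [pf_eq hn.1 hn.2]; exact Finset.filter_subset _ _
    have h1 : y ^ n.primeFactors.card = ∏ _p ∈ n.primeFactors, ((y-1) + 1) := by
      rw [Finset.prod_const]; norm_num
    rw [h1, Finset.prod_add]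
    have h2 : ∀ t ∈ n.primeFactors.powerset,
        (∏ _p ∈ t, (y-1)) * ∏ _p ∈ n.primeFactors \ t, (1:ℝ) = (y-1)^t.card := by
      intro t ht
      rw [Finset.prod_const, Finset.prod_const, one_pow, mul_one]
    rw [Finset.sum_congr rfl h2]
    have h3 : n.primeFactors.powerset = P.powerset.filter (· ⊆ n.primeFactors) := by
      ext t
      simp only [Finset.mem_powerset, Finset.mem_filter]
      exact ⟨fun h => ⟨h.trans hsub, h⟩, fun h => h.2⟩
    rw [h3, Finset.sum_filter]
  rw [Finset.sum_congr rfl hexpand, Finset.sum_comm]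
  have hcount : ∀ S ∈ P.powerset,
      (∑ n ∈ Icc 1 N, if S ⊆ n.primeFactors then (y-1)^S.card else 0)
        ≤ (N : ℝ) * ∏ p ∈ S, ((y-1)/p) := by
    intro S hS
    simp only [Finset.mem_powerset] at hS
    have hprime : ∀ p ∈ S, p.Prime := fun p hp => Nat.prime_of_mem_primesBelow (hS hp)
    have hdpos : 0 < ∏ p ∈ S, p := Finset.prod_pos fun p hp => (hprime p hp).pos
    rw [← Finset.sum_filter, Finset.sum_const, nsmul_eq_mul]
    have hcard : ((Icc 1 N).filter (fun n => S ⊆ n.primeFactors)).card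
        ≤ N / (∏ p ∈ S, p) := by
      have hsub2 : (Icc 1 N).filter (fun n => S ⊆ n.primeFactors)
          ⊆ (Ioc 0 N).filter (fun n => (∏ p ∈ S, p) ∣ n) := by
        intro n hn
        simp only [Finset.mem_filter, mem_Icc, mem_Ioc] at hn ⊢
        refine ⟨⟨by omega, hn.1.2⟩, ?_⟩
        exact Finset.prod_primes_dvd n (fun p hp => (hprime p hp).prime)
          (fun p hp => Nat.dvd_of_mem_primeFactors (hn.2 hp))
      calc ((Icc 1 N).filter (fun n => S ⊆ n.primeFactors)).card
          ≤ ((Ioc 0 N).filter (fun n => (∏ p ∈ S, p) ∣ n)).card :=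
            Finset.card_le_card hsub2
        _ = N / (∏ p ∈ S, p) := Nat.Ioc_filter_dvd_card_eq_div N _
    have hpow : (0:ℝ) ≤ (y-1)^S.card := pow_nonneg hy0 _
    calc (((Icc 1 N).filter (fun n => S ⊆ n.primeFactors)).card : ℝ) * (y-1)^S.card
        ≤ ((N / (∏ p ∈ S, p) : ℕ) : ℝ) * (y-1)^S.card := by
          apply mul_le_mul_of_nonneg_right _ hpow
          exact_mod_cast hcard
      _ ≤ ((N:ℝ) / ((∏ p ∈ S, p : ℕ) : ℝ)) * (y-1)^S.card := by
          apply mul_le_mul_of_nonneg_right (Nat.cast_div_le) hpow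
      _ = (N:ℝ) * ∏ p ∈ S, ((y-1)/p) := by
          rw [Finset.prod_div_distrib, Finset.prod_const]
          rw [show ((∏ p ∈ S, p : ℕ) : ℝ) = ∏ p ∈ S, (p:ℝ) by push_cast; rfl]
          ring
  refine (Finset.sum_le_sum hcount).trans (le_of_eq ?_)
  rw [← Finset.mul_sum]
  congr 1
  rw [Finset.prod_congr rfl (show ∀ p ∈ P, 1 + (y-1)/(p:ℝ) = (y-1)/(p:ℝ) + 1
    from fun p _ => add_comm _ _), Finset.prod_add]
  refine Finset.sum_congr rfl fun t ht => ?_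
  rw [Finset.prod_const, one_pow, mul_one]

lemma mean_bound (y : ℝ) (hy : 1 ≤ y) (N : ℕ) (hN : 2 ≤ N) :
    ∑ n ∈ Icc 1 N, y ^ n.primeFactors.card
      ≤ N * Real.exp ((y-1) * (Real.log (Real.log N) + Mconst)) := by
  have hy0 : (0:ℝ) ≤ y - 1 := by linarith
  refine (sum_pow_omega y hy N (by omega)).trans ?_
  apply mul_le_mul_of_nonneg_left _ (show (0:ℝ) ≤ N from by positivity)
  calc ∏ p ∈ Nat.primesBelow (N+1), (1 + (y-1)/p)
      ≤ ∏ p ∈ Nat.primesBelow (N+1), Real.exp ((y-1)/p) := by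
        apply Finset.prod_le_prod
        · intro p hp
          have : (0:ℝ) < p := by exact_mod_cast (Nat.prime_of_mem_primesBelow hp).pos
          positivity
        · intro p hp
          have := Real.add_one_le_exp ((y-1)/p)
          linarith
    _ = Real.exp (∑ p ∈ Nat.primesBelow (N+1), (y-1)/p) := (Real.exp_sum _ _).symm
    _ ≤ Real.exp ((y-1) * (Real.log (Real.log N) + Mconst)) := by
        apply Real.exp_le_exp.mpr
        have e : ∑ p ∈ Nat.primesBelow (N+1), (y-1)/p
            = (y-1) * ∑ p ∈ Nat.primesBelow (N+1), (1:ℝ)/p := by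
          rw [Finset.mul_sum]
          exact Finset.sum_congr rfl fun p _ => by ring
        rw [e]
        exact mul_le_mul_of_nonneg_left (mertens2 N hN) hy0

end SLOB

open SLOB

/-- with `Ω(N) = e·3^k(log log N + B)`, the sum over `n ≤ N` with
`ω(n) ≥ Ω(N)` of `3^{kω(n)}` is `O_k(N / log N)`. -/
theorem sum_large_omega_bound (k : ℕ) (hk : 1 ≤ k) (B : ℝ) (hB : 0 < B) :
    ∃ C : ℝ, 0 < C ∧ ∀ N : ℕ, 2 ≤ N →
      (∑ n ∈ Finset.Icc 1 N,
        if Real.exp 1 * 3 ^ k * (Real.log (Real.log N) + B) ≤ (n.primeFactors.card : ℝ)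
        then (3 : ℝ) ^ (k * n.primeFactors.card) else 0) ≤
      C * N / Real.log N := by
  set y : ℝ := Real.exp 1 * 3 ^ k with hy_def
  have h3k : (1:ℝ) ≤ 3 ^ k := by
    have : (1:ℕ) ≤ 3 ^ k := Nat.one_le_pow k 3 (by norm_num)
    exact_mod_cast this
  have hexp1 : (1:ℝ) ≤ Real.exp 1 := by linarith [Real.add_one_le_exp (1:ℝ)]
  have hy1 : (1:ℝ) ≤ y := by
    have h := mul_le_mul hexp1 h3k zero_le_one (by positivity : (0:ℝ) ≤ Real.exp 1)
    rw [one_mul] at h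
    exact h
  have hypos : (0:ℝ) < y := by linarith
  refine ⟨Real.exp ((y-1) * Mconst), Real.exp_pos _, fun N hN => ?_⟩
  have hlogN : (0:ℝ) < Real.log N := by
    apply Real.log_pos; exact_mod_cast Nat.lt_of_lt_of_le one_lt_two hN
  set L : ℝ := Real.exp 1 * 3 ^ k * (Real.log (Real.log N) + B) with hL_def
  -- termwise Rankin bound
  have hterm : ∀ n ∈ Icc 1 N,
      (if L ≤ (n.primeFactors.card : ℝ) then (3:ℝ) ^ (k * n.primeFactors.card) else 0)
        ≤ Real.exp (-L) * y ^ n.primeFactors.card := by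
    intro n _
    set w := n.primeFactors.card
    have hyw : y ^ w = Real.exp w * (3:ℝ) ^ (k * w) := by
      rw [hy_def, mul_pow, ← Real.exp_one_pow, pow_mul]
    by_cases hc : L ≤ (w:ℝ)
    · rw [if_pos hc, hyw]
      have h3pos : (0:ℝ) < (3:ℝ) ^ (k * w) := by positivity
      have : (1:ℝ) ≤ Real.exp (-L) * Real.exp w := by
        rw [← Real.exp_add]
        have : (0:ℝ) ≤ -L + w := by linarith
        calc (1:ℝ) = Real.exp 0 := Real.exp_zero.symm
          _ ≤ Real.exp (-L + w) := Real.exp_le_exp.mpr this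
      calc (3:ℝ) ^ (k * w) = 1 * (3:ℝ) ^ (k * w) := (one_mul _).symm
        _ ≤ (Real.exp (-L) * Real.exp w) * (3:ℝ) ^ (k * w) :=
            mul_le_mul_of_nonneg_right this h3pos.le
        _ = Real.exp (-L) * (Real.exp w * (3:ℝ) ^ (k * w)) := by ring
    · rw [if_neg hc]
      positivity
  calc (∑ n ∈ Finset.Icc 1 N,
        if L ≤ (n.primeFactors.card : ℝ) then (3:ℝ) ^ (k * n.primeFactors.card) else 0)
      ≤ ∑ n ∈ Icc 1 N, Real.exp (-L) * y ^ n.primeFactors.card :=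
        Finset.sum_le_sum hterm
    _ = Real.exp (-L) * ∑ n ∈ Icc 1 N, y ^ n.primeFactors.card := by
        rw [Finset.mul_sum]
    _ ≤ Real.exp (-L) * (N * Real.exp ((y-1) * (Real.log (Real.log N) + Mconst))) := by
        apply mul_le_mul_of_nonneg_left (mean_bound y hy1 N hN) (Real.exp_pos _).le
    _ = (N:ℝ) * (Real.exp (-L) * Real.exp ((y-1) * (Real.log (Real.log N) + Mconst))) := by
        ring
    _ = (N:ℝ) * (Real.exp ((y-1) * Mconst) * (Real.exp (-(y*B)) * (Real.log N)⁻¹)) := by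
        have hexp_eq : Real.exp (-L) * Real.exp ((y-1) * (Real.log (Real.log N) + Mconst))
            = Real.exp ((y-1)*Mconst) * (Real.exp (-(y*B))
                * Real.exp (-(Real.log (Real.log N)))) := by
          rw [← Real.exp_add, ← Real.exp_add, ← Real.exp_add, hL_def, hy_def]
          congr 1
          ring
        have h2 : Real.exp (-(Real.log (Real.log N))) = (Real.log N)⁻¹ := by
          rw [Real.exp_neg, Real.exp_log hlogN]
        rw [hexp_eq, h2]
    _ ≤ (N:ℝ) * (Real.exp ((y-1) * Mconst) * (1 * (Real.log N)⁻¹)) := by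
        have h1 : Real.exp (-(y*B)) ≤ 1 := by
          rw [show (1:ℝ) = Real.exp 0 from Real.exp_zero.symm]
          apply Real.exp_le_exp.mpr
          nlinarith
        apply mul_le_mul_of_nonneg_left _ (show (0:ℝ) ≤ N from by positivity)
        apply mul_le_mul_of_nonneg_left _ (Real.exp_pos _).le
        apply mul_le_mul_of_nonneg_right h1 (inv_nonneg.mpr hlogN.le)
    _ = Real.exp ((y-1) * Mconst) * N / Real.log N := by
        rw [div_eq_mul_inv]
        ring
end
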